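/- arXiv:2511.17328 — 3 statements merged into one kernel-verified Lean document; each statement's English description precedes it below -/
import Mathlib

section
/- Fix τ > 0, c > 0 and γ > 0. For every sufficiently small ε > 0 the partial derivatives of f at (τ,c,ε) exist, and as ε → 0⁺: the partial derivative of f with respect to τ tends to 0; the partial derivative of f with respect to c tends to φ_f'(c) = (1/c²) ∫_{−∞}^0 x e^{x/c} K(x) dx; and the partial derivative of f with respect to ε tends to 2φ_f(c) − (1/c) ∫_{−∞}^0 |x|·(e^{x/c}+1)·K(x) dx. -/
set_option maxHeartbeats 1000000

open MeasureTheory Real Filter Set Topology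

noncomputable def om1 (γ ε : ℝ) : ℝ := (1 + γ * ε + Real.sqrt ((1 - γ * ε) ^ 2 - 4 * ε)) / 2

noncomputable def om2 (γ ε : ℝ) : ℝ := (1 + γ * ε - Real.sqrt ((1 - γ * ε) ^ 2 - 4 * ε)) / 2

noncomputable def Cx (γ x c ε : ℝ) : ℝ :=
  (1 / (c * (om1 γ ε - om2 γ ε))) *
    ((1 - om2 γ ε) * Real.exp (om1 γ ε * x / c) - (1 - om1 γ ε) * Real.exp (om2 γ ε * x / c))

/-- Pulse speed index function `f(τ,c,ε)`. -/
noncomputable def ff (K : ℝ → ℝ) (γ τ c ε : ℝ) : ℝ :=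
  ∫ x in Iio (0:ℝ), Cx γ x c ε * ∫ y in (x - τ / ε)..x, K y

/-- Front speed index function. -/
noncomputable def phiF (K : ℝ → ℝ) (c : ℝ) : ℝ :=
  (∫ x in Iio (0:ℝ), K x) - ∫ x in Iio (0:ℝ), Real.exp (x / c) * K x

/- ### auxiliary definitions -/

noncomputable def sQ (γ ε : ℝ) : ℝ := (1 - γ * ε) ^ 2 - 4 * ε
noncomputable def dom1 (γ ε : ℝ) : ℝ :=
  (γ + (2*γ^2*ε - 2*γ - 4) / (2 * Real.sqrt (sQ γ ε))) / 2
noncomputable def dom2 (γ ε : ℝ) : ℝ :=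
  (γ - (2*γ^2*ε - 2*γ - 4) / (2 * Real.sqrt (sQ γ ε))) / 2
noncomputable def eps1 (γ : ℝ) : ℝ := 1 / (16 * (γ + 1)^2)

/-- numerator of `Cx` -/
noncomputable def NN (γ x c ε : ℝ) : ℝ :=
  (1 - om2 γ ε) * Real.exp (om1 γ ε * x / c) - (1 - om1 γ ε) * Real.exp (om2 γ ε * x / c)

/-- derivative of the numerator w.r.t. `c` -/
noncomputable def dNc (γ x c ε : ℝ) : ℝ :=
  (1 - om2 γ ε) * (Real.exp (om1 γ ε * x / c) * (-(om1 γ ε * x) / c^2))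
    - (1 - om1 γ ε) * (Real.exp (om2 γ ε * x / c) * (-(om2 γ ε * x) / c^2))

/-- derivative of `Cx` w.r.t. `c` -/
noncomputable def dCc (γ x c ε : ℝ) : ℝ :=
  (dNc γ x c ε * (c * (om1 γ ε - om2 γ ε)) - NN γ x c ε * (om1 γ ε - om2 γ ε))
    / (c * (om1 γ ε - om2 γ ε))^2

/-- derivative of the numerator w.r.t. `ε` -/
noncomputable def dNe (γ x c ε : ℝ) : ℝ :=
  ((-dom2 γ ε) * Real.exp (om1 γ ε * x / c)
      + (1 - om2 γ ε) * (Real.exp (om1 γ ε * x / c) * (dom1 γ ε * x / c)))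
    - ((-dom1 γ ε) * Real.exp (om2 γ ε * x / c)
      + (1 - om1 γ ε) * (Real.exp (om2 γ ε * x / c) * (dom2 γ ε * x / c)))

/-- derivative of `Cx` w.r.t. `ε` -/
noncomputable def dCe (γ x c ε : ℝ) : ℝ :=
  (dNe γ x c ε * (c * (om1 γ ε - om2 γ ε)) - NN γ x c ε * (c * (dom1 γ ε - dom2 γ ε)))
    / (c * (om1 γ ε - om2 γ ε))^2

/-- antiderivative of `K` -/
noncomputable def FK (K : ℝ → ℝ) (x : ℝ) : ℝ := ∫ y in Iic x, K y

/- ### omega facts -/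

lemma om1_eq (γ ε : ℝ) : om1 γ ε = (1 + γ * ε + Real.sqrt (sQ γ ε)) / 2 := rfl
lemma om2_eq (γ ε : ℝ) : om2 γ ε = (1 + γ * ε - Real.sqrt (sQ γ ε)) / 2 := rfl

lemma eps1_pos {γ : ℝ} (hγ : 0 < γ) : 0 < eps1 γ := by
  unfold eps1; positivity

section omfacts
variable {γ ε : ℝ} (hγ : 0 < γ) (hε : 0 < ε) (hε1 : ε < eps1 γ)
include hγ hε hε1

lemma ge_bounds : γ * ε < 1/16 ∧ ε < 1/16 := by
  unfold eps1 at hε1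
  have h1 : 0 < (γ+1)^2 := by positivity
  have key : ε * (16 * (γ+1)^2) < 1 := by
    rw [lt_div_iff₀ (by positivity)] at hε1; linarith
  constructor
  · nlinarith [sq_nonneg (γ - 1), sq_nonneg γ, hγ.le]
  · nlinarith [sq_nonneg (γ+1), sq_nonneg γ]

lemma gsq_bound : γ^2 * ε < 1/16 := by
  unfold eps1 at hε1
  have key : ε * (16 * (γ+1)^2) < 1 := by
    rw [lt_div_iff₀ (by positivity)] at hε1; linarith
  nlinarith [sq_nonneg γ, hγ.le, hε.le]

lemma sQ_bounds : 1/2 < sQ γ ε ∧ sQ γ ε ≤ 1 := by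
  obtain ⟨h1, h2⟩ := ge_bounds hγ hε hε1
  have hge : 0 < γ * ε := by positivity
  have h3 : (γ*ε)^2 < (1/16) * (γ*ε) := by nlinarith
  constructor
  · unfold sQ; nlinarith
  · unfold sQ; nlinarith

lemma sqrt_sQ_bounds : 7/10 < Real.sqrt (sQ γ ε) ∧ Real.sqrt (sQ γ ε) ≤ 1 := by
  obtain ⟨h1, h2⟩ := sQ_bounds hγ hε hε1
  have h0 : 0 ≤ sQ γ ε := by linarith
  have hs := Real.sq_sqrt h0
  have hnn := Real.sqrt_nonneg (sQ γ ε)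
  constructor <;> nlinarith

omit hγ hε hε1 in
lemma om1_sub_om2 : om1 γ ε - om2 γ ε = Real.sqrt (sQ γ ε) := by
  rw [om1_eq, om2_eq]; ring

lemma om_bounds : 3/4 < om1 γ ε ∧ om1 γ ε < 1 ∧ 0 < om2 γ ε ∧ om2 γ ε < 1/4 := by
  obtain ⟨hg1, hg2⟩ := ge_bounds hγ hε hε1
  obtain ⟨hq1, hq2⟩ := sQ_bounds hγ hε hε1
  obtain ⟨hs1, hs2⟩ := sqrt_sQ_bounds hγ hε hε1
  have h0 : 0 ≤ sQ γ ε := by linarith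
  have hsq := Real.sq_sqrt h0
  have hnn := Real.sqrt_nonneg (sQ γ ε)
  have hge : 0 < γ * ε := by positivity
  have hsQdef : sQ γ ε = (1-γ*ε)^2 - 4*ε := rfl
  have hslt : Real.sqrt (sQ γ ε) < 1 - γ * ε := by
    have h1ge : 0 < 1 - γ * ε := by linarith
    nlinarith [hsq]
  refine ⟨?_, ?_, ?_, ?_⟩
  · rw [om1_eq]; linarith
  · rw [om1_eq]; linarith
  · rw [om2_eq]; nlinarith
  · rw [om2_eq]; linarith

lemma dom_bounds : |dom1 γ ε| ≤ 2*γ + 2 ∧ |dom2 γ ε| ≤ 2*γ + 2 := by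
  obtain ⟨hs1, hs2⟩ := sqrt_sQ_bounds hγ hε hε1
  have hg2 := gsq_bound hγ hε hε1
  set s := Real.sqrt (sQ γ ε) with hs
  have hnum : |2*γ^2*ε - 2*γ - 4| ≤ 2*γ + 4 + 1/8 := by
    rw [abs_le]
    constructor <;> nlinarith [mul_pos (mul_pos two_pos (pow_pos hγ 2)) hε]
  have hq : |(2*γ^2*ε - 2*γ - 4) / (2 * s)| ≤ 3/2*γ + 3 := by
    rw [abs_div, abs_of_pos (by linarith : (0:ℝ) < 2*s)]
    rw [div_le_iff₀ (by linarith)]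
    nlinarith
  constructor
  · unfold dom1
    rw [← hs, abs_div, abs_of_pos (by norm_num : (0:ℝ) < 2), div_le_iff₀ (by norm_num)]
    calc |γ + (2*γ^2*ε - 2*γ - 4) / (2*s)| ≤ |γ| + |(2*γ^2*ε - 2*γ - 4) / (2*s)| := abs_add_le _ _
    _ ≤ γ + (3/2*γ+3) := by rw [abs_of_pos hγ]; linarith
    _ ≤ (2*γ+2)*2 := by linarith
  · unfold dom2
    rw [← hs, abs_div, abs_of_pos (by norm_num : (0:ℝ) < 2), div_le_iff₀ (by norm_num)]
    calc |γ - (2*γ^2*ε - 2*γ - 4) / (2*s)| ≤ |γ| + |(2*γ^2*ε - 2*γ - 4) / (2*s)| := abs_sub _ _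
    _ ≤ γ + (3/2*γ+3) := by rw [abs_of_pos hγ]; linarith
    _ ≤ (2*γ+2)*2 := by linarith

end omfacts

/- ### derivatives of omegas -/

lemma sQ_hasDeriv (γ ε : ℝ) : HasDerivAt (fun e => sQ γ e) (2*γ^2*ε - 2*γ - 4) ε := by
  have h1 : HasDerivAt (fun e : ℝ => 1 - γ * e) (-γ) ε := by
    simpa using ((hasDerivAt_id ε).const_mul γ).const_sub 1
  have h2 := (h1.pow 2).sub ((hasDerivAt_id ε).const_mul 4)
  refine h2.congr_deriv ?_
  ring

lemma sqrt_sQ_hasDeriv {γ ε : ℝ} (h : sQ γ ε ≠ 0) :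
    HasDerivAt (fun e => Real.sqrt (sQ γ e)) ((2*γ^2*ε - 2*γ - 4) / (2 * Real.sqrt (sQ γ ε))) ε := by
  have := (Real.hasDerivAt_sqrt h).comp ε (sQ_hasDeriv γ ε)
  refine this.congr_deriv ?_
  field_simp

lemma om1_hasDeriv {γ ε : ℝ} (h : sQ γ ε ≠ 0) :
    HasDerivAt (fun e => om1 γ e) (dom1 γ ε) ε := by
  have h1 : HasDerivAt (fun e : ℝ => 1 + γ * e) γ ε := by
    simpa using ((hasDerivAt_id ε).const_mul γ).const_add 1
  have := (h1.add (sqrt_sQ_hasDeriv h)).div_const 2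
  simp only [om1_eq]
  exact this

lemma om2_hasDeriv {γ ε : ℝ} (h : sQ γ ε ≠ 0) :
    HasDerivAt (fun e => om2 γ e) (dom2 γ ε) ε := by
  have h1 : HasDerivAt (fun e : ℝ => 1 + γ * e) γ ε := by
    simpa using ((hasDerivAt_id ε).const_mul γ).const_add 1
  have := (h1.sub (sqrt_sQ_hasDeriv h)).div_const 2
  simp only [om2_eq]
  exact this

lemma sQ_zero (γ : ℝ) : sQ γ 0 = 1 := by unfold sQ; ring
lemma om1_zero (γ : ℝ) : om1 γ 0 = 1 := by
  rw [om1_eq, sQ_zero, Real.sqrt_one]; ring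
lemma om2_zero (γ : ℝ) : om2 γ 0 = 0 := by
  rw [om2_eq, sQ_zero, Real.sqrt_one]; ring
lemma dom1_zero (γ : ℝ) : dom1 γ 0 = -1 := by
  unfold dom1; rw [sQ_zero, Real.sqrt_one]; ring
lemma dom2_zero (γ : ℝ) : dom2 γ 0 = γ + 1 := by
  unfold dom2; rw [sQ_zero, Real.sqrt_one]; ring

lemma sQ_continuous (γ : ℝ) : Continuous (fun e => sQ γ e) := by
  unfold sQ; continuity

lemma om1_continuousAt_zero (γ : ℝ) : ContinuousAt (fun e => om1 γ e) 0 := by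
  simp only [om1_eq]
  exact (((continuousAt_const.add (continuousAt_const.mul continuousAt_id)).add
    ((Real.continuous_sqrt.continuousAt).comp (sQ_continuous γ).continuousAt)).div_const 2)

lemma om2_continuousAt_zero (γ : ℝ) : ContinuousAt (fun e => om2 γ e) 0 := by
  simp only [om2_eq]
  exact (((continuousAt_const.add (continuousAt_const.mul continuousAt_id)).sub
    ((Real.continuous_sqrt.continuousAt).comp (sQ_continuous γ).continuousAt)).div_const 2)

lemma sqrtsQ_continuousAt_zero (γ : ℝ) : ContinuousAt (fun e => Real.sqrt (sQ γ e)) 0 :=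
  (Real.continuous_sqrt.continuousAt).comp (sQ_continuous γ).continuousAt

lemma dom1_continuousAt_zero (γ : ℝ) : ContinuousAt (fun e => dom1 γ e) 0 := by
  unfold dom1
  apply ContinuousAt.div_const
  apply continuousAt_const.add
  apply ContinuousAt.div
  · fun_prop
  · exact continuousAt_const.mul (sqrtsQ_continuousAt_zero γ)
  · simp [sQ_zero]

lemma dom2_continuousAt_zero (γ : ℝ) : ContinuousAt (fun e => dom2 γ e) 0 := by
  unfold dom2
  apply ContinuousAt.div_const
  apply continuousAt_const.sub
  apply ContinuousAt.div
  · fun_prop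
  · exact continuousAt_const.mul (sqrtsQ_continuousAt_zero γ)
  · simp [sQ_zero]

/- ### elementary integrability helpers -/

lemma u_exp_le (u : ℝ) (hu : 0 ≤ u) : u * Real.exp (-u) ≤ 1 := by
  have h1 : u ≤ Real.exp u := by linarith [Real.add_one_le_exp u]
  calc u * Real.exp (-u) ≤ Real.exp u * Real.exp (-u) := by
        apply mul_le_mul_of_nonneg_right h1 (Real.exp_nonneg _)
  _ = 1 := by rw [← Real.exp_add]; simp

lemma abs_mul_exp_le {r : ℝ} (hr : 0 < r) {x : ℝ} (hx : x ≤ 0) :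
    |x| * Real.exp (r*x) ≤ (2/r) * Real.exp (r/2*x) := by
  have h1 : |x| * Real.exp (r/2*x) ≤ 2/r := by
    have hu := u_exp_le (r/2 * (-x)) (by nlinarith)
    have hxabs : |x| = -x := abs_of_nonpos hx
    have h2 : Real.exp (r/2*x) = Real.exp (-(r/2 * (-x))) := by ring_nf
    rw [hxabs, h2]
    calc -x * Real.exp (-(r/2 * (-x)))
        = (2/r) * ((r/2 * (-x)) * Real.exp (-(r/2 * (-x)))) := by field_simp
    _ ≤ (2/r) * 1 := by
        apply mul_le_mul_of_nonneg_left hu (by positivity)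
    _ = 2/r := mul_one _
  have h2 : Real.exp (r*x) = Real.exp (r/2*x) * Real.exp (r/2*x) := by
    rw [← Real.exp_add]; ring_nf
  calc |x| * Real.exp (r*x) = (|x| * Real.exp (r/2*x)) * Real.exp (r/2*x) := by rw [h2]; ring
  _ ≤ (2/r) * Real.exp (r/2*x) := by
      apply mul_le_mul_of_nonneg_right h1 (Real.exp_nonneg _)

lemma exp_antideriv {r : ℝ} (hr : r ≠ 0) (x : ℝ) :
    HasDerivAt (fun y => Real.exp (r*y)/r) (Real.exp (r*x)) x := by
  have h := (((hasDerivAt_id x).const_mul r).exp).div_const r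
  refine h.congr_deriv ?_
  simp only [id_eq]; field_simp

lemma exp_intervalInt {r : ℝ} (hr : r ≠ 0) (a b : ℝ) :
    ∫ x in a..b, Real.exp (r*x) = Real.exp (r*b)/r - Real.exp (r*a)/r := by
  apply intervalIntegral.integral_eq_sub_of_hasDerivAt (fun y _ => exp_antideriv hr y)
  exact (Real.continuous_exp.comp (continuous_const.mul continuous_id)).intervalIntegrable a b

lemma expIic {r : ℝ} (hr : 0 < r) (b : ℝ) :
    IntegrableOn (fun x => Real.exp (r*x)) (Iic b) := by
  apply integrableOn_Iic_of_intervalIntegral_norm_bounded (Real.exp (r*b)/r) b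
    (a := fun i : ℝ => i) (l := atBot) ?_ tendsto_id ?_
  · intro i
    exact (Real.continuous_exp.comp (continuous_const.mul continuous_id)).integrableOn_Ioc
  · filter_upwards with i
    simp only [Real.norm_eq_abs, Real.abs_exp]
    rw [exp_intervalInt hr.ne' i b]
    have := Real.exp_pos (r*i)
    have := Real.exp_pos (r*b)
    have : 0 < Real.exp (r*i) / r := by positivity
    linarith

lemma exp_tendsto_atBot {r : ℝ} (hr : 0 < r) :
    Tendsto (fun x => Real.exp (r*x)) atBot (𝓝 0) := by
  apply Real.tendsto_exp_atBot.comp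
  exact Tendsto.const_mul_atBot hr tendsto_id

lemma exp_integral_Iic {r : ℝ} (hr : 0 < r) (b : ℝ) :
    ∫ x in Iic b, Real.exp (r*x) = Real.exp (r*b)/r := by
  have h := integral_Iic_of_hasDerivAt_of_tendsto' (f := fun y => Real.exp (r*y)/r)
    (f' := fun x => Real.exp (r*x)) (a := b) (m := 0)
    (fun x _ => exp_antideriv hr.ne' x) (expIic hr b)
    (by simpa using (exp_tendsto_atBot hr).div_const r)
  rw [h, sub_zero]

lemma integrable_of_decay {f : ℝ → ℝ} (hf : Continuous f) {C r : ℝ} (hr : 0 < r)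
    (h : ∀ x ≤ (0:ℝ), |f x| ≤ C * Real.exp (r*x)) : IntegrableOn f (Iic (0:ℝ)) := by
  apply Integrable.mono' ((expIic hr 0).const_mul C) hf.aestronglyMeasurable.restrict
  rw [ae_restrict_iff' measurableSet_Iic]
  exact ae_of_all _ fun x hx => by simpa using h x hx

section Ksec
variable {K : ℝ → ℝ} {α ρ : ℝ}

lemma Kint (hK : Continuous K) (hρ : 0 < ρ)
    (hdec : ∀ x, |K x| ≤ α * Real.exp (-ρ * |x|)) : Integrable K := by
  rw [← integrableOn_univ, ← Iic_union_Ioi (a := (0:ℝ)), integrableOn_union]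
  constructor
  · apply integrable_of_decay hK hρ
    intro x hx
    have h2 : -ρ * |x| = ρ * x := by rw [abs_of_nonpos hx]; ring
    have := hdec x
    rwa [h2] at this
  · apply Integrable.mono' ((exp_neg_integrableOn_Ioi 0 hρ).const_mul α)
      hK.aestronglyMeasurable.restrict
    rw [ae_restrict_iff' measurableSet_Ioi]
    apply ae_of_all _ fun x hx => ?_
    have := hdec x
    rw [abs_of_pos (a := x) hx] at this
    simpa [mul_comm ρ x] using this

lemma FK_hasDeriv (hK : Continuous K) (hρ : 0 < ρ)
    (hdec : ∀ x, |K x| ≤ α * Real.exp (-ρ * |x|)) (x : ℝ) :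
    HasDerivAt (FK K) (K x) x := by
  have hint := Kint hK hρ hdec
  have h0 : ∀ z, FK K z = FK K (x-1) + ∫ y in (x-1)..z, K y := by
    intro z
    have := intervalIntegral.integral_Iic_sub_Iic (f := K) (μ := volume) hint.integrableOn hint.integrableOn
      (a := x-1) (b := z)
    unfold FK
    linarith
  have hd : HasDerivAt (fun z => ∫ y in (x-1)..z, K y) (K x) x :=
    intervalIntegral.integral_hasDerivAt_right (hK.intervalIntegrable _ _)
      (hK.stronglyMeasurableAtFilter _ _) hK.continuousAt
  have := hd.const_add (FK K (x-1))
  exact this.congr_of_eventuallyEq (Eventually.of_forall fun z => (h0 z))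

lemma FK_bound (hK : Continuous K) (hρ : 0 < ρ)
    (hdec : ∀ x, |K x| ≤ α * Real.exp (-ρ * |x|)) {x : ℝ} (hx : x ≤ 0) :
    |FK K x| ≤ α/ρ * Real.exp (ρ*x) := by
  have hint := Kint hK hρ hdec
  have hα : 0 ≤ α := le_trans (abs_nonneg _) ((hdec 0).trans_eq (by simp))
  calc |FK K x| ≤ ∫ y in Iic x, |K y| := by
        exact (norm_integral_le_integral_norm K).trans_eq (by simp)
  _ ≤ ∫ y in Iic x, α * Real.exp (ρ*y) := by
      apply setIntegral_mono_on hint.abs.integrableOn (((expIic hρ x).const_mul α))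
        measurableSet_Iic
      intro y hy
      have hy0 : y ≤ 0 := le_trans hy hx
      have h2 : -ρ * |y| = ρ * y := by rw [abs_of_nonpos hy0]; ring
      have := hdec y
      rwa [h2] at this
  _ = α * (Real.exp (ρ*x)/ρ) := by rw [integral_const_mul, exp_integral_Iic hρ]
  _ = α/ρ * Real.exp (ρ*x) := by ring

lemma FK_tendsto (hK : Continuous K) (hα : 0 < α) (hρ : 0 < ρ)
    (hdec : ∀ x, |K x| ≤ α * Real.exp (-ρ * |x|)) :
    Tendsto (FK K) atBot (𝓝 0) := by
  have h1 : ∀ᶠ x in atBot, ‖FK K x‖ ≤ α/ρ * Real.exp (ρ*x) := by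
    filter_upwards [eventually_le_atBot (0:ℝ)] with x hx
    exact FK_bound hK hρ hdec hx
  have h2 : Tendsto (fun x => α/ρ * Real.exp (ρ*x)) atBot (𝓝 0) := by
    simpa using (exp_tendsto_atBot hρ).const_mul (α/ρ)
  exact squeeze_zero_norm' h1 h2

lemma intervalK (hK : Continuous K) (hρ : 0 < ρ)
    (hdec : ∀ x, |K x| ≤ α * Real.exp (-ρ * |x|)) (a b : ℝ) :
    ∫ y in a..b, K y = FK K b - FK K a := by
  have hint := Kint hK hρ hdec
  exact (intervalIntegral.integral_Iic_sub_Iic hint.integrableOn hint.integrableOn).symm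

end Ksec

/- ### bounds and derivatives for Cx -/

lemma amul {a b A B : ℝ} (ha : |a| ≤ A) (hb : |b| ≤ B) : |a*b| ≤ A*B := by
  rw [abs_mul]
  exact mul_le_mul ha hb (abs_nonneg _) (le_trans (abs_nonneg _) ha)

lemma exp_om_le {ω x c' : ℝ} (hω : 0 ≤ ω) (hx : x ≤ 0) (hc : 0 < c') :
    |Real.exp (ω*x/c')| ≤ 1 := by
  rw [Real.abs_exp, Real.exp_le_one_iff]
  have h1 : ω * x ≤ 0 := mul_nonpos_iff.2 (Or.inl ⟨hω, hx⟩)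
  exact div_nonpos_of_nonpos_of_nonneg h1 hc.le

lemma Cx_eq_div (γ x c ε : ℝ) :
    Cx γ x c ε = NN γ x c ε / (c * (om1 γ ε - om2 γ ε)) := by
  rw [Cx, NN, one_div, inv_mul_eq_div]

section cxbounds
variable {γ ε x c' : ℝ} (hγ : 0 < γ) (hε : 0 < ε) (hε1 : ε < eps1 γ) (hx : x ≤ 0) (hc' : 0 < c')
include hγ hε hε1 hx hc'

lemma NN_abs_le : |NN γ x c' ε| ≤ 2 := by
  obtain ⟨h1, h2, h3, h4⟩ := om_bounds hγ hε hε1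
  have e1 := exp_om_le (by linarith : (0:ℝ) ≤ om1 γ ε) hx hc'
  have e2 := exp_om_le (by linarith : (0:ℝ) ≤ om2 γ ε) hx hc'
  have b1 : |1 - om2 γ ε| ≤ 1 := by rw [abs_le]; constructor <;> linarith
  have b2 : |1 - om1 γ ε| ≤ 1 := by rw [abs_le]; constructor <;> linarith
  calc |NN γ x c' ε| ≤ |(1 - om2 γ ε) * Real.exp (om1 γ ε * x / c')|
        + |(1 - om1 γ ε) * Real.exp (om2 γ ε * x / c')| := abs_sub _ _
  _ ≤ 1*1 + 1*1 := add_le_add (amul b1 e1) (amul b2 e2)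
  _ = 2 := by norm_num

lemma Cx_abs_le : |Cx γ x c' ε| ≤ 4/c' := by
  obtain ⟨hs1, hs2⟩ := sqrt_sQ_bounds hγ hε hε1
  have hD : om1 γ ε - om2 γ ε = Real.sqrt (sQ γ ε) := om1_sub_om2
  rw [Cx_eq_div, abs_div, hD, abs_of_pos (by positivity : (0:ℝ) < c' * Real.sqrt (sQ γ ε)),
    div_le_iff₀ (by positivity)]
  have := NN_abs_le hγ hε hε1 hx hc'
  have h4 : 4/c' * (c' * Real.sqrt (sQ γ ε)) = 4 * Real.sqrt (sQ γ ε) := by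
    field_simp
  rw [h4]
  nlinarith

lemma dNc_abs_le : |dNc γ x c' ε| ≤ 2*|x|/c'^2 := by
  obtain ⟨h1, h2, h3, h4⟩ := om_bounds hγ hε hε1
  have e1 := exp_om_le (by linarith : (0:ℝ) ≤ om1 γ ε) hx hc'
  have e2 := exp_om_le (by linarith : (0:ℝ) ≤ om2 γ ε) hx hc'
  have b1 : |1 - om2 γ ε| ≤ 1 := by rw [abs_le]; constructor <;> linarith
  have b2 : |1 - om1 γ ε| ≤ 1 := by rw [abs_le]; constructor <;> linarith
  have hv1 : |(-(om1 γ ε * x)) / c'^2| ≤ |x|/c'^2 := by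
    rw [abs_div, abs_neg, abs_mul, abs_of_pos (by positivity : (0:ℝ) < c'^2)]
    apply div_le_div_of_nonneg_right ?_ (by positivity)
    nlinarith [abs_nonneg x, abs_of_pos (by linarith : (0:ℝ) < om1 γ ε)]
  have hv2 : |(-(om2 γ ε * x)) / c'^2| ≤ |x|/c'^2 := by
    rw [abs_div, abs_neg, abs_mul, abs_of_pos (by positivity : (0:ℝ) < c'^2)]
    apply div_le_div_of_nonneg_right ?_ (by positivity)
    nlinarith [abs_nonneg x, abs_of_pos (by linarith : (0:ℝ) < om2 γ ε)]
  calc |dNc γ x c' ε|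
      ≤ |(1 - om2 γ ε) * (Real.exp (om1 γ ε * x / c') * (-(om1 γ ε * x) / c'^2))|
        + |(1 - om1 γ ε) * (Real.exp (om2 γ ε * x / c') * (-(om2 γ ε * x) / c'^2))| := abs_sub _ _
  _ ≤ 1 * (1 * (|x|/c'^2)) + 1 * (1 * (|x|/c'^2)) :=
      add_le_add (amul b1 (amul e1 hv1)) (amul b2 (amul e2 hv2))
  _ = 2*|x|/c'^2 := by ring

lemma dCc_abs_le {c : ℝ} (hc : 0 < c) (hl : c/2 ≤ c') (hr : c' ≤ 3*c/2) :
    |dCc γ x c' ε| ≤ (4*|x|/c + 2) * (9/c^2) := by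
  obtain ⟨hs1, hs2⟩ := sqrt_sQ_bounds hγ hε hε1
  have hD : om1 γ ε - om2 γ ε = Real.sqrt (sQ γ ε) := om1_sub_om2
  set s := Real.sqrt (sQ γ ε) with hsdef
  set X := |x| with hXdef
  have hX : 0 ≤ X := abs_nonneg x
  have hnum : |dNc γ x c' ε * (c' * (om1 γ ε - om2 γ ε)) - NN γ x c' ε * (om1 γ ε - om2 γ ε)|
      ≤ (2*X/c'^2) * c' + 2 * 1 := by
    apply (abs_sub _ _).trans
    apply add_le_add
    · apply amul (dNc_abs_le hγ hε hε1 hx hc')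
      rw [hD, abs_of_pos (by positivity)]
      nlinarith
    · apply amul (NN_abs_le hγ hε hε1 hx hc')
      rw [hD, abs_of_pos (by linarith)]
      linarith
  have hden_low : (c/2*(7/10))^2 ≤ (c' * (om1 γ ε - om2 γ ε))^2 := by
    rw [hD]
    have h1 : c/2 * (7/10) ≤ c' * s := by nlinarith
    nlinarith [mul_pos hc (by linarith : (0:ℝ) < (7:ℝ)/10)]
  have hstep : |dCc γ x c' ε| ≤ ((2*X/c'^2) * c' + 2 * 1) / ((c/2*(7/10))^2) := by
    rw [dCc, abs_div, abs_of_pos (by rw [hD]; positivity : (0:ℝ) < (c' * (om1 γ ε - om2 γ ε))^2)]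
    exact div_le_div₀ (by positivity) hnum (by positivity) hden_low
  apply hstep.trans
  have h2 : (2*X/c'^2) * c' = 2*X/c' := by field_simp
  have h3 : 2*X/c' ≤ 4*X/c := by
    have := div_le_div_of_nonneg_left (by linarith : (0:ℝ) ≤ 2*X) (by linarith : (0:ℝ) < c/2) hl
    calc 2*X/c' ≤ 2*X/(c/2) := this
    _ = 4*X/c := by field_simp; ring
  rw [h2]
  rw [div_le_iff₀ (by positivity)]
  have hXc : 0 ≤ X/c := by positivity
  have hcancel : (4*X/c+2)*(9/c^2)*(c/2*(7/10))^2 = (4*X/c+2)*(441/400) := by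
    field_simp; ring
  rw [hcancel]
  have hX4 : 0 ≤ 4*X/c := div_nonneg (by linarith) hc.le
  linarith

lemma dNe_abs_le : |dNe γ x c' ε| ≤ (2*γ+2) * (2 + 2*|x|/c') := by
  obtain ⟨h1, h2, h3, h4⟩ := om_bounds hγ hε hε1
  obtain ⟨hd1, hd2⟩ := dom_bounds hγ hε hε1
  have e1 := exp_om_le (by linarith : (0:ℝ) ≤ om1 γ ε) hx hc'
  have e2 := exp_om_le (by linarith : (0:ℝ) ≤ om2 γ ε) hx hc'
  have b1 : |1 - om2 γ ε| ≤ 1 := by rw [abs_le]; constructor <;> linarith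
  have b2 : |1 - om1 γ ε| ≤ 1 := by rw [abs_le]; constructor <;> linarith
  have hM : (0:ℝ) < 2*γ+2 := by linarith
  have hv1 : |dom1 γ ε * x / c'| ≤ (2*γ+2) * |x| / c' := by
    rw [abs_div, abs_mul, abs_of_pos hc']
    apply div_le_div_of_nonneg_right ?_ hc'.le
    exact mul_le_mul_of_nonneg_right hd1 (abs_nonneg x)
  have hv2 : |dom2 γ ε * x / c'| ≤ (2*γ+2) * |x| / c' := by
    rw [abs_div, abs_mul, abs_of_pos hc']
    apply div_le_div_of_nonneg_right ?_ hc'.le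
    exact mul_le_mul_of_nonneg_right hd2 (abs_nonneg x)
  have hn1 : |(-dom2 γ ε) * Real.exp (om1 γ ε * x / c')
      + (1 - om2 γ ε) * (Real.exp (om1 γ ε * x / c') * (dom1 γ ε * x / c'))|
      ≤ (2*γ+2) * 1 + 1 * (1 * ((2*γ+2) * |x| / c')) := by
    apply (abs_add_le _ _).trans
    apply add_le_add
    · exact amul (by rwa [abs_neg]) e1
    · exact amul b1 (amul e1 hv1)
  have hn2 : |(-dom1 γ ε) * Real.exp (om2 γ ε * x / c')
      + (1 - om1 γ ε) * (Real.exp (om2 γ ε * x / c') * (dom2 γ ε * x / c'))|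
      ≤ (2*γ+2) * 1 + 1 * (1 * ((2*γ+2) * |x| / c')) := by
    apply (abs_add_le _ _).trans
    apply add_le_add
    · exact amul (by rwa [abs_neg]) e2
    · exact amul b2 (amul e2 hv2)
  calc |dNe γ x c' ε| ≤ _ + _ := abs_sub _ _
  _ ≤ ((2*γ+2) * 1 + 1 * (1 * ((2*γ+2) * |x| / c')))
      + ((2*γ+2) * 1 + 1 * (1 * ((2*γ+2) * |x| / c'))) := add_le_add hn1 hn2
  _ = (2*γ+2) * (2 + 2*|x|/c') := by ring

lemma dCe_abs_le : |dCe γ x c' ε| ≤ (2*γ+2) * (6 + 2*|x|/c') * 3 / c' := by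
  obtain ⟨hs1, hs2⟩ := sqrt_sQ_bounds hγ hε hε1
  obtain ⟨hd1, hd2⟩ := dom_bounds hγ hε hε1
  have hD : om1 γ ε - om2 γ ε = Real.sqrt (sQ γ ε) := om1_sub_om2
  set s := Real.sqrt (sQ γ ε) with hsdef
  set X := |x| with hXdef
  have hX : 0 ≤ X := abs_nonneg x
  have hM : (0:ℝ) < 2*γ+2 := by linarith
  have hdd : |c' * (dom1 γ ε - dom2 γ ε)| ≤ c' * (2*(2*γ+2)) := by
    rw [abs_mul, abs_of_pos hc']
    apply mul_le_mul_of_nonneg_left ?_ hc'.le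
    apply (abs_sub _ _).trans; linarith
  have hnum : |dNe γ x c' ε * (c' * (om1 γ ε - om2 γ ε))
      - NN γ x c' ε * (c' * (dom1 γ ε - dom2 γ ε))|
      ≤ ((2*γ+2) * (2 + 2*X/c')) * (c' * 1) + 2 * (c' * (2*(2*γ+2))) := by
    apply (abs_sub _ _).trans
    apply add_le_add
    · apply amul (dNe_abs_le hγ hε hε1 hx hc')
      rw [hD, abs_of_pos (by positivity)]
      nlinarith
    · exact amul (NN_abs_le hγ hε hε1 hx hc') hdd
  have hden_low : (c'*(7/10))^2 ≤ (c' * (om1 γ ε - om2 γ ε))^2 := by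
    rw [hD]
    have h1 : c' * (7/10) ≤ c' * s := by nlinarith
    nlinarith [mul_pos hc' (by linarith : (0:ℝ) < (7:ℝ)/10)]
  have hstep : |dCe γ x c' ε|
      ≤ (((2*γ+2) * (2 + 2*X/c')) * (c' * 1) + 2 * (c' * (2*(2*γ+2)))) / ((c'*(7/10))^2) := by
    rw [dCe, abs_div, abs_of_pos (by rw [hD]; positivity : (0:ℝ) < (c' * (om1 γ ε - om2 γ ε))^2)]
    exact div_le_div₀ (by positivity) hnum (by positivity) hden_low
  apply hstep.trans
  rw [div_le_div_iff₀ (by positivity) hc']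
  have hXc : 0 ≤ X/c' := by positivity
  have e1 : ((2*γ+2) * (2 + 2*X/c') * (c' * 1) + 2 * (c' * (2*(2*γ+2)))) * c'
      = (2*γ+2)*(6 + 2*X/c')*c'^2 := by field_simp; ring
  have e2 : (2*γ+2) * (6 + 2*X/c') * 3 * (c'*(7/10))^2
      = (147/100) * ((2*γ+2)*(6 + 2*X/c')*c'^2) := by ring
  rw [e1, e2]
  have h6 : (0:ℝ) ≤ 2*X/c' := div_nonneg (by linarith) hc'.le
  nlinarith [mul_pos (mul_pos hM (by linarith : (0:ℝ) < 6 + 2*X/c')) (mul_pos hc' hc'),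
    sq_nonneg c']

end cxbounds

/- ### derivatives of Cx -/

lemma hasDerivAt_Cx_c {γ ε x t : ℝ} (hD : om1 γ ε - om2 γ ε ≠ 0) (ht : t ≠ 0) :
    HasDerivAt (fun c' => Cx γ x c' ε) (dCc γ x t ε) t := by
  have hi1 : HasDerivAt (fun c' : ℝ => om1 γ ε * x / c') (-(om1 γ ε * x) / t^2) t := by
    have := (hasDerivAt_const t (om1 γ ε * x)).div (hasDerivAt_id t) ht
    refine this.congr_deriv ?_
    simp only [id_eq]; field_simp; ring
  have hi2 : HasDerivAt (fun c' : ℝ => om2 γ ε * x / c') (-(om2 γ ε * x) / t^2) t := by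
    have := (hasDerivAt_const t (om2 γ ε * x)).div (hasDerivAt_id t) ht
    refine this.congr_deriv ?_
    simp only [id_eq]; field_simp; ring
  have he1 : HasDerivAt (fun c' => Real.exp (om1 γ ε * x / c'))
      (Real.exp (om1 γ ε * x / t) * (-(om1 γ ε * x) / t^2)) t := hi1.exp
  have he2 : HasDerivAt (fun c' => Real.exp (om2 γ ε * x / c'))
      (Real.exp (om2 γ ε * x / t) * (-(om2 γ ε * x) / t^2)) t := hi2.exp
  have hN : HasDerivAt (fun c' => NN γ x c' ε) (dNc γ x t ε) t := by
    unfold NN dNc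
    exact (he1.const_mul _).sub (he2.const_mul _)
  have hDen : HasDerivAt (fun c' : ℝ => c' * (om1 γ ε - om2 γ ε)) (om1 γ ε - om2 γ ε) t :=
    hasDerivAt_mul_const _
  have hne : t * (om1 γ ε - om2 γ ε) ≠ 0 := mul_ne_zero ht hD
  have := hN.div hDen hne
  have hfun : (fun c' => NN γ x c' ε / (c' * (om1 γ ε - om2 γ ε)))
      = fun c' => Cx γ x c' ε := by
    funext c'
    rw [Cx_eq_div]
  rw [← hfun]
  exact this

lemma hasDerivAt_Cx_e {γ x c : ℝ} (ε : ℝ) (hsQ : sQ γ ε ≠ 0)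
    (hD : om1 γ ε - om2 γ ε ≠ 0) (hc : c ≠ 0) :
    HasDerivAt (fun e => Cx γ x c e) (dCe γ x c ε) ε := by
  have ho1 := om1_hasDeriv hsQ
  have ho2 := om2_hasDeriv hsQ
  have he1 : HasDerivAt (fun e => Real.exp (om1 γ e * x / c))
      (Real.exp (om1 γ ε * x / c) * (dom1 γ ε * x / c)) ε := ((ho1.mul_const x).div_const c).exp
  have he2 : HasDerivAt (fun e => Real.exp (om2 γ e * x / c))
      (Real.exp (om2 γ ε * x / c) * (dom2 γ ε * x / c)) ε := ((ho2.mul_const x).div_const c).exp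
  have hA : HasDerivAt (fun e => 1 - om2 γ e) (-dom2 γ ε) ε := ho2.const_sub 1
  have hB : HasDerivAt (fun e => 1 - om1 γ e) (-dom1 γ ε) ε := ho1.const_sub 1
  have hN : HasDerivAt (fun e => NN γ x c e) (dNe γ x c ε) ε := by
    unfold NN dNe
    exact (hA.mul he1).sub (hB.mul he2)
  have hDen : HasDerivAt (fun e : ℝ => c * (om1 γ e - om2 γ e))
      (c * (dom1 γ ε - dom2 γ ε)) ε := (ho1.sub ho2).const_mul c
  have hne : c * (om1 γ ε - om2 γ ε) ≠ 0 := mul_ne_zero hc hD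
  have := hN.div hDen hne
  have hfun : (fun e => NN γ x c e / (c * (om1 γ e - om2 γ e)))
      = fun e => Cx γ x c e := by
    funext e
    rw [Cx_eq_div]
  rw [← hfun]
  exact this

/- ### values and continuity at ε = 0 -/

lemma NN_zero (γ x c : ℝ) : NN γ x c 0 = Real.exp (x/c) := by
  simp [NN, om1_zero, om2_zero]

lemma dCc_zero (γ x c : ℝ) (hc : c ≠ 0) :
    dCc γ x c 0 = -((1 + x/c) * Real.exp (x/c)) / c^2 := by
  unfold dCc dNc
  rw [NN_zero, om1_zero, om2_zero]
  simp only [one_mul, sub_zero, sub_self, zero_mul, mul_zero]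
  field_simp
  ring

lemma dCe_zero (γ x c : ℝ) (hc : c ≠ 0) :
    dCe γ x c 0 = ((1 - x/c) * Real.exp (x/c) - 1) / c := by
  unfold dCe dNe
  rw [NN_zero, om1_zero, om2_zero, dom1_zero, dom2_zero]
  simp only [one_mul, sub_zero, sub_self, zero_mul, mul_zero, mul_one]
  rw [show (0:ℝ)/c = 0 from zero_div c, Real.exp_zero]
  field_simp
  ring

lemma tendsto_dCc_zero (γ x c : ℝ) (hc : c ≠ 0) :
    Tendsto (fun e => dCc γ x c e) (𝓝[>] 0) (𝓝 (dCc γ x c 0)) := by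
  have h1 := om1_continuousAt_zero γ
  have h2 := om2_continuousAt_zero γ
  have hcont : ContinuousAt (fun e => dCc γ x c e) 0 := by
    unfold dCc dNc NN
    apply ContinuousAt.div
    · fun_prop
    · fun_prop
    · simp [om1_zero, om2_zero]
      positivity
  exact hcont.tendsto.mono_left nhdsWithin_le_nhds

lemma tendsto_dCe_zero (γ x c : ℝ) (hc : c ≠ 0) :
    Tendsto (fun e => dCe γ x c e) (𝓝[>] 0) (𝓝 (dCe γ x c 0)) := by
  have h1 := om1_continuousAt_zero γ
  have h2 := om2_continuousAt_zero γ
  have h3 := dom1_continuousAt_zero γ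
  have h4 := dom2_continuousAt_zero γ
  have hcont : ContinuousAt (fun e => dCe γ x c e) 0 := by
    unfold dCe dNe NN
    apply ContinuousAt.div
    · fun_prop
    · fun_prop
    · simp [om1_zero, om2_zero]
      positivity
  exact hcont.tendsto.mono_left nhdsWithin_le_nhds

lemma Cx_cont_x (γ c ε : ℝ) : Continuous (fun x => Cx γ x c ε) := by
  unfold Cx
  fun_prop

/- ### main section -/

section main
variable {K : ℝ → ℝ} {α ρ τ c γ : ℝ}

lemma FK_cont (hK : Continuous K) (hρ : 0 < ρ)
    (hdec : ∀ x, |K x| ≤ α * Real.exp (-ρ * |x|)) : Continuous (FK K) :=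
  continuous_iff_continuousAt.2 fun x => (FK_hasDeriv hK hρ hdec x).continuousAt

lemma ff_FK (hK : Continuous K) (hρ : 0 < ρ)
    (hdec : ∀ x, |K x| ≤ α * Real.exp (-ρ * |x|)) (γ t c e : ℝ) :
    ff K γ t c e = ∫ x in Iio (0:ℝ), Cx γ x c e * (FK K x - FK K (x - t/e)) := by
  unfold ff
  congr 1
  funext x
  rw [intervalK hK hρ hdec]

lemma G_abs_le (hK : Continuous K) (hρ : 0 < ρ)
    (hdec : ∀ x, |K x| ≤ α * Real.exp (-ρ * |x|)) {x u : ℝ} (hx : x ≤ 0) (hu : 0 ≤ u) :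
    |FK K x - FK K (x - u)| ≤ 2*(α/ρ) * Real.exp (ρ*x) := by
  have h1 := FK_bound hK hρ hdec hx
  have h2 := FK_bound hK hρ hdec (by linarith : x - u ≤ 0)
  have h3 : Real.exp (ρ*(x-u)) ≤ Real.exp (ρ*x) := by
    apply Real.exp_le_exp.2
    nlinarith
  calc |FK K x - FK K (x - u)| ≤ |FK K x| + |FK K (x-u)| := abs_sub _ _
  _ ≤ α/ρ * Real.exp (ρ*x) + α/ρ * Real.exp (ρ*(x-u)) := add_le_add h1 h2
  _ ≤ 2*(α/ρ) * Real.exp (ρ*x) := by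
      have hαr : 0 ≤ α/ρ := by
        have hα : 0 ≤ α := le_trans (abs_nonneg _) ((hdec 0).trans_eq (by simp))
        positivity
      nlinarith [Real.exp_pos (ρ*x)]

lemma int_polyexp_Iic (hρ : 0 < ρ) (A B : ℝ) :
    IntegrableOn (fun x => (A*|x| + B) * Real.exp (ρ*x)) (Iic (0:ℝ)) := by
  apply integrable_of_decay (by fun_prop) (half_pos hρ) (C := abs A * (2/ρ) + abs B)
  intro x hx
  have h1 : |(A*|x| + B) * Real.exp (ρ*x)| ≤ (abs A * |x| + abs B) * Real.exp (ρ*x) := by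
    rw [abs_mul, Real.abs_exp]
    apply mul_le_mul_of_nonneg_right ?_ (Real.exp_nonneg _)
    calc |A*|x| + B| ≤ abs (A*|x|) + abs B := abs_add_le _ _
    _ = abs A * |x| + abs B := by rw [abs_mul, abs_abs]
  apply h1.trans
  have h2 : |x| * Real.exp (ρ*x) ≤ (2/ρ) * Real.exp (ρ/2*x) := abs_mul_exp_le hρ hx
  have h3 : Real.exp (ρ*x) ≤ Real.exp (ρ/2*x) := by
    apply Real.exp_le_exp.2
    nlinarith
  have hA : 0 ≤ abs A := abs_nonneg A
  have hB : 0 ≤ abs B := abs_nonneg B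
  calc (abs A * |x| + abs B) * Real.exp (ρ*x)
      = abs A * (|x| * Real.exp (ρ*x)) + abs B * Real.exp (ρ*x) := by ring
  _ ≤ abs A * ((2/ρ) * Real.exp (ρ/2*x)) + abs B * Real.exp (ρ/2*x) := by
      apply add_le_add
      · exact mul_le_mul_of_nonneg_left h2 hA
      · exact mul_le_mul_of_nonneg_left h3 hB
  _ = (abs A * (2/ρ) + abs B) * Real.exp (ρ/2*x) := by ring

lemma int_polyexp (hρ : 0 < ρ) (A B : ℝ) :
    IntegrableOn (fun x => (A*|x| + B) * Real.exp (ρ*x)) (Iio (0:ℝ)) :=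
  (int_polyexp_Iic hρ A B).mono_set Iio_subset_Iic_self

variable (hK : Continuous K) (hα : 0 < α) (hρ : 0 < ρ)
  (hdec : ∀ x, |K x| ≤ α * Real.exp (-ρ * |x|))
  (hτ : 0 < τ) (hc : 0 < c) (hγ : 0 < γ)
include hK hα hρ hdec hτ hc hγ

lemma deriv_tau {ε : ℝ} (hε : 0 < ε) (hε1 : ε < eps1 γ) :
    HasDerivAt (fun t => ff K γ t c ε)
      (∫ x in Iio (0:ℝ), Cx γ x c ε * ((1/ε) * K (x - τ/ε))) τ := by
  have hff : (fun t => ff K γ t c ε)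
      = fun t => ∫ x in Iio (0:ℝ), Cx γ x c ε * (FK K x - FK K (x - t/ε)) :=
    funext fun t => ff_FK hK hρ hdec γ t c ε
  rw [hff]
  have hcont := FK_cont hK hρ hdec
  have key := hasDerivAt_integral_of_dominated_loc_of_deriv_le
    (μ := volume.restrict (Iio (0:ℝ))) (x₀ := τ) (s := Metric.ball τ (τ/2))
    (F := fun t x => Cx γ x c ε * (FK K x - FK K (x - t/ε)))
    (F' := fun t x => Cx γ x c ε * ((1/ε) * K (x - t/ε)))
    (bound := fun x => (4/c) * ((1/ε) * (α * Real.exp (ρ*x))))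
    (Metric.ball_mem_nhds _ (by linarith))
    (Eventually.of_forall fun t =>
      (((Cx_cont_x γ c ε).mul (hcont.sub (hcont.comp (by fun_prop)))).aestronglyMeasurable).restrict)
    ?_ ?_ ?_ ?_ ?_
  · exact key.2
  · -- integrability of F τ
    apply IntegrableOn.mono_set ?_ Iio_subset_Iic_self
    apply integrable_of_decay ((Cx_cont_x γ c ε).mul (hcont.sub (hcont.comp (continuous_id.sub continuous_const))))
      hρ (C := (4/c) * (2*(α/ρ)))
    intro x hx
    calc |Cx γ x c ε * (FK K x - FK K (x - τ/ε))|
        ≤ (4/c) * (2*(α/ρ) * Real.exp (ρ*x)) :=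
          amul (Cx_abs_le hγ hε hε1 hx hc) (G_abs_le hK hρ hdec hx (by positivity))
    _ = (4/c) * (2*(α/ρ)) * Real.exp (ρ*x) := by ring
  · exact (((Cx_cont_x γ c ε).mul ((continuous_const.mul (hK.comp (by fun_prop))))).aestronglyMeasurable).restrict
  · -- bound
    rw [ae_restrict_iff' measurableSet_Iio]
    apply ae_of_all
    intro x hx t ht
    rw [Metric.mem_ball, Real.dist_eq, abs_lt] at ht
    have htpos : 0 < t := by linarith
    have hx0 : x ≤ 0 := le_of_lt hx
    have hshift : x - t/ε ≤ 0 := by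
      have : 0 ≤ t/ε := by positivity
      linarith
    have hKb : |K (x - t/ε)| ≤ α * Real.exp (ρ*x) := by
      have h2 : -ρ * |x - t/ε| = ρ * (x - t/ε) := by
        rw [abs_of_nonpos hshift]; ring
      have h3 := hdec (x - t/ε)
      rw [h2] at h3
      apply h3.trans
      have hα' : 0 ≤ α := le_trans (abs_nonneg _) ((hdec 0).trans_eq (by simp))
      apply mul_le_mul_of_nonneg_left ?_ hα'
      apply Real.exp_le_exp.2
      have : 0 ≤ t/ε := by positivity
      nlinarith
    rw [Real.norm_eq_abs]
    exact amul (Cx_abs_le hγ hε hε1 hx0 hc)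
      (amul (by rw [abs_of_pos (by positivity : (0:ℝ) < 1/ε)] : |1/ε| ≤ 1/ε) hKb)
  · -- integrability of bound
    have hb : IntegrableOn (fun x => (4/c) * ((1/ε) * α) * Real.exp (ρ*x)) (Iic (0:ℝ)) :=
      (expIic hρ 0).const_mul _
    have := hb.mono_set Iio_subset_Iic_self
    apply this.congr
    apply ae_of_all
    intro x
    ring
  · -- differentiability
    apply ae_of_all
    intro x t _
    have hi : HasDerivAt (fun t' : ℝ => x - t'/ε) (-(1/ε)) t := by
      simpa using ((hasDerivAt_id t).div_const ε).const_sub x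
    have hFt : HasDerivAt (fun t' => FK K (x - t'/ε)) (K (x - t/ε) * -(1/ε)) t := by
      have := (FK_hasDeriv hK hρ hdec (x - t/ε)).comp t hi
      exact this
    have := (hFt.const_sub (FK K x)).const_mul (Cx γ x c ε)
    refine this.congr_deriv ?_
    ring

omit hK hα hρ hdec hτ hc hγ in
lemma int_dom_Iic {f : ℝ → ℝ} (hf : Continuous f) (hρ' : 0 < ρ) {A B : ℝ}
    (h : ∀ x ≤ (0:ℝ), |f x| ≤ (A*|x| + B) * Real.exp (ρ*x)) :
    IntegrableOn f (Iic (0:ℝ)) := by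
  apply Integrable.mono' (int_polyexp_Iic hρ' A B) hf.aestronglyMeasurable.restrict
  rw [ae_restrict_iff' measurableSet_Iic]
  exact ae_of_all _ fun x hx => h x hx

omit hK hα hρ hdec hτ hc hγ in
lemma int_dom {f : ℝ → ℝ} (hf : Continuous f) (hρ' : 0 < ρ) {A B : ℝ}
    (h : ∀ x ≤ (0:ℝ), |f x| ≤ (A*|x| + B) * Real.exp (ρ*x)) :
    IntegrableOn f (Iio (0:ℝ)) :=
  (int_dom_Iic hf hρ' h).mono_set Iio_subset_Iic_self

omit hK hα hρ hdec hτ hc hγ in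
lemma dCc_cont_x (γ c ε : ℝ) : Continuous (fun x => dCc γ x c ε) := by
  unfold dCc dNc NN; fun_prop

omit hK hα hρ hdec hτ hc hγ in
lemma dCe_cont_x (γ c ε : ℝ) : Continuous (fun x => dCe γ x c ε) := by
  unfold dCe dNe NN; fun_prop

lemma deriv_c {ε : ℝ} (hε : 0 < ε) (hε1 : ε < eps1 γ) :
    HasDerivAt (fun t => ff K γ τ t ε)
      (∫ x in Iio (0:ℝ), dCc γ x c ε * (FK K x - FK K (x - τ/ε))) c := by
  have hff : (fun t => ff K γ τ t ε)
      = fun t => ∫ x in Iio (0:ℝ), Cx γ x t ε * (FK K x - FK K (x - τ/ε)) :=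
    funext fun t => ff_FK hK hρ hdec γ τ t ε
  rw [hff]
  have hcont := FK_cont hK hρ hdec
  have hDne : om1 γ ε - om2 γ ε ≠ 0 := by
    rw [om1_sub_om2]
    have := (sqrt_sQ_bounds hγ hε hε1).1
    linarith
  have key := hasDerivAt_integral_of_dominated_loc_of_deriv_le
    (μ := volume.restrict (Iio (0:ℝ))) (x₀ := c) (s := Metric.ball c (c/2))
    (F := fun t x => Cx γ x t ε * (FK K x - FK K (x - τ/ε)))
    (F' := fun t x => dCc γ x t ε * (FK K x - FK K (x - τ/ε)))
    (bound := fun x => ((4*|x|/c + 2) * (9/c^2)) * (2*(α/ρ) * Real.exp (ρ*x)))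
    (Metric.ball_mem_nhds _ (by linarith))
    (Eventually.of_forall fun t =>
      (((Cx_cont_x γ t ε).mul (hcont.sub (hcont.comp (continuous_id.sub continuous_const)))).aestronglyMeasurable).restrict)
    ?_ ?_ ?_ ?_ ?_
  · exact key.2
  · apply IntegrableOn.mono_set ?_ Iio_subset_Iic_self
    apply integrable_of_decay ((Cx_cont_x γ c ε).mul (hcont.sub (hcont.comp (continuous_id.sub continuous_const))))
      hρ (C := (4/c) * (2*(α/ρ)))
    intro x hx
    calc |Cx γ x c ε * (FK K x - FK K (x - τ/ε))|
        ≤ (4/c) * (2*(α/ρ) * Real.exp (ρ*x)) :=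
          amul (Cx_abs_le hγ hε hε1 hx hc) (G_abs_le hK hρ hdec hx (by positivity))
    _ = (4/c) * (2*(α/ρ)) * Real.exp (ρ*x) := by ring
  · exact (((dCc_cont_x γ c ε).mul (hcont.sub (hcont.comp (continuous_id.sub continuous_const)))).aestronglyMeasurable).restrict
  · rw [ae_restrict_iff' measurableSet_Iio]
    apply ae_of_all
    intro x hx t ht
    rw [Metric.mem_ball, Real.dist_eq, abs_lt] at ht
    have htpos : 0 < t := by linarith
    have hx0 : x ≤ 0 := le_of_lt hx
    rw [Real.norm_eq_abs]
    exact amul (dCc_abs_le hγ hε hε1 hx0 htpos hc (by linarith) (by linarith))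
      (G_abs_le hK hρ hdec hx0 (by positivity))
  · apply (int_polyexp hρ ((4/c)*(9/c^2)*(2*(α/ρ))) (2*(9/c^2)*(2*(α/ρ)))).congr
    apply ae_of_all
    intro x
    ring
  · apply ae_of_all
    intro x t ht
    rw [Metric.mem_ball, Real.dist_eq, abs_lt] at ht
    have htpos : 0 < t := by linarith
    exact (hasDerivAt_Cx_c hDne htpos.ne').mul_const _

lemma deriv_eps {ε : ℝ} (hε : 0 < ε) (hε1 : ε < eps1 γ) :
    HasDerivAt (fun t => ff K γ τ c t)
      ((∫ x in Iio (0:ℝ), dCe γ x c ε * (FK K x - FK K (x - τ/ε)))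
        - ∫ x in Iio (0:ℝ), Cx γ x c ε * (K (x - τ/ε) * (τ/ε^2))) ε := by
  have hff : (fun t => ff K γ τ c t)
      = fun t => ∫ x in Iio (0:ℝ), Cx γ x c t * (FK K x - FK K (x - τ/t)) :=
    funext fun t => ff_FK hK hρ hdec γ τ c t
  rw [hff]
  have hcont := FK_cont hK hρ hdec
  set δ := min (ε/2) ((eps1 γ - ε)/2) with hδdef
  have hδpos : 0 < δ := by
    apply lt_min (by linarith)
    have := hε1
    linarith
  have hball : ∀ t ∈ Metric.ball ε δ, ε/2 < t ∧ t < eps1 γ ∧ 0 < t := by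
    intro t ht
    rw [Metric.mem_ball, Real.dist_eq, abs_lt] at ht
    have h1 : δ ≤ ε/2 := min_le_left _ _
    have h2 : δ ≤ (eps1 γ - ε)/2 := min_le_right _ _
    refine ⟨by linarith, by linarith, by linarith⟩
  have key := hasDerivAt_integral_of_dominated_loc_of_deriv_le
    (μ := volume.restrict (Iio (0:ℝ))) (x₀ := ε) (s := Metric.ball ε (δ))
    (F := fun t x => Cx γ x c t * (FK K x - FK K (x - τ/t)))
    (F' := fun t x => dCe γ x c t * (FK K x - FK K (x - τ/t))
      - Cx γ x c t * (K (x - τ/t) * (τ/t^2)))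
    (bound := fun x => ((2*γ+2)*(6+2*|x|/c)*3/c) * (2*(α/ρ)*Real.exp (ρ*x))
      + (4/c) * (α*Real.exp (ρ*x) * (τ*(4/ε^2))))
    (Metric.ball_mem_nhds _ hδpos)
    (Eventually.of_forall fun t =>
      (((Cx_cont_x γ c t).mul (hcont.sub (hcont.comp (continuous_id.sub continuous_const)))).aestronglyMeasurable).restrict)
    ?_ ?_ ?_ ?_ ?_
  · have h2 := key.2
    have hsplit : (∫ x in Iio (0:ℝ), (dCe γ x c ε * (FK K x - FK K (x - τ/ε))
        - Cx γ x c ε * (K (x - τ/ε) * (τ/ε^2))))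
        = (∫ x in Iio (0:ℝ), dCe γ x c ε * (FK K x - FK K (x - τ/ε)))
          - ∫ x in Iio (0:ℝ), Cx γ x c ε * (K (x - τ/ε) * (τ/ε^2)) := by
      apply integral_sub
      · apply int_dom ((dCe_cont_x γ c ε).mul (hcont.sub (hcont.comp (continuous_id.sub continuous_const)))) hρ
          (A := (2*γ+2)*(2/c)*(3/c)*(2*(α/ρ))) (B := (2*γ+2)*6*(3/c)*(2*(α/ρ)))
        intro x hx
        calc |dCe γ x c ε * (FK K x - FK K (x - τ/ε))|
            ≤ ((2*γ+2)*(6+2*|x|/c)*3/c) * (2*(α/ρ) * Real.exp (ρ*x)) :=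
              amul (dCe_abs_le hγ hε hε1 hx hc) (G_abs_le hK hρ hdec hx (by positivity))
        _ = ((2*γ+2)*(2/c)*(3/c)*(2*(α/ρ))*|x| + (2*γ+2)*6*(3/c)*(2*(α/ρ))) * Real.exp (ρ*x) := by
              ring
      · apply int_dom ((Cx_cont_x γ c ε).mul ((hK.comp (continuous_id.sub continuous_const)).mul continuous_const)) hρ
          (A := 0) (B := (4/c)*α*(τ/ε^2))
        intro x hx
        have hshift : x - τ/ε ≤ 0 := by
          have : 0 ≤ τ/ε := by positivity
          linarith
        have hKb : |K (x - τ/ε)| ≤ α * Real.exp (ρ*x) := by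
          have h2' : -ρ * |x - τ/ε| = ρ * (x - τ/ε) := by
            rw [abs_of_nonpos hshift]; ring
          have h3 := hdec (x - τ/ε)
          rw [h2'] at h3
          apply h3.trans
          have hα' : 0 ≤ α := hα.le
          apply mul_le_mul_of_nonneg_left ?_ hα'
          apply Real.exp_le_exp.2
          have : 0 ≤ τ/ε := by positivity
          nlinarith
        calc |Cx γ x c ε * (K (x - τ/ε) * (τ/ε^2))|
            ≤ (4/c) * ((α * Real.exp (ρ*x)) * (τ/ε^2)) :=
              amul (Cx_abs_le hγ hε hε1 hx hc)
                (amul hKb (by rw [abs_of_pos (by positivity)] : |τ/ε^2| ≤ τ/ε^2))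
        _ = (0*|x| + (4/c)*α*(τ/ε^2)) * Real.exp (ρ*x) := by ring
    rw [← hsplit]
    exact h2
  · apply IntegrableOn.mono_set ?_ Iio_subset_Iic_self
    apply integrable_of_decay ((Cx_cont_x γ c ε).mul (hcont.sub (hcont.comp (continuous_id.sub continuous_const))))
      hρ (C := (4/c) * (2*(α/ρ)))
    intro x hx
    calc |Cx γ x c ε * (FK K x - FK K (x - τ/ε))|
        ≤ (4/c) * (2*(α/ρ) * Real.exp (ρ*x)) :=
          amul (Cx_abs_le hγ hε hε1 hx hc) (G_abs_le hK hρ hdec hx (by positivity))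
    _ = (4/c) * (2*(α/ρ)) * Real.exp (ρ*x) := by ring
  · apply AEStronglyMeasurable.restrict
    apply Continuous.aestronglyMeasurable
    apply Continuous.sub
    · exact (dCe_cont_x γ c ε).mul (hcont.sub (hcont.comp (continuous_id.sub continuous_const)))
    · exact (Cx_cont_x γ c ε).mul ((hK.comp (continuous_id.sub continuous_const)).mul continuous_const)
  · rw [ae_restrict_iff' measurableSet_Iio]
    apply ae_of_all
    intro x hx t ht
    obtain ⟨ht1, ht2, ht3⟩ := hball t ht
    have hx0 : x ≤ 0 := le_of_lt hx
    have hshift : x - τ/t ≤ 0 := by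
      have : 0 ≤ τ/t := by positivity
      linarith
    have hKb : |K (x - τ/t)| ≤ α * Real.exp (ρ*x) := by
      have h2' : -ρ * |x - τ/t| = ρ * (x - τ/t) := by
        rw [abs_of_nonpos hshift]; ring
      have h3 := hdec (x - τ/t)
      rw [h2'] at h3
      apply h3.trans
      apply mul_le_mul_of_nonneg_left ?_ hα.le
      apply Real.exp_le_exp.2
      have : 0 ≤ τ/t := by positivity
      nlinarith
    have htt : τ/t^2 ≤ τ*(4/ε^2) := by
      rw [div_le_iff₀ (by positivity)]
      have h4 : ε^2/4 ≤ t^2 := by nlinarith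
      have := mul_le_mul_of_nonneg_left h4 (by positivity : (0:ℝ) ≤ τ*(4/ε^2))
      calc τ = τ*(4/ε^2) * (ε^2/4) := by field_simp
      _ ≤ τ*(4/ε^2) * t^2 := by
          apply mul_le_mul_of_nonneg_left h4 (by positivity)
    rw [Real.norm_eq_abs]
    apply (abs_sub _ _).trans
    apply add_le_add
    · exact amul (dCe_abs_le hγ ht3 ht2 hx0 hc) (G_abs_le hK hρ hdec hx0 (by positivity))
    · calc |Cx γ x c t * (K (x - τ/t) * (τ/t^2))|
          ≤ (4/c) * ((α * Real.exp (ρ*x)) * (τ*(4/ε^2))) :=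
            amul (Cx_abs_le hγ ht3 ht2 hx0 hc)
              (amul hKb (by rw [abs_of_pos (by positivity)]; exact htt))
      _ = (4/c) * (α*Real.exp (ρ*x) * (τ*(4/ε^2))) := by ring
  · apply (int_polyexp hρ ((2*γ+2)*(2/c)*(3/c)*(2*(α/ρ)))
      ((2*γ+2)*6*(3/c)*(2*(α/ρ)) + (4/c)*α*(τ*(4/ε^2)))).congr
    apply ae_of_all
    intro x
    ring
  · apply ae_of_all
    intro x t ht
    obtain ⟨ht1, ht2, ht3⟩ := hball t ht
    have hsQne : sQ γ t ≠ 0 := by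
      have := (sQ_bounds hγ ht3 ht2).1
      linarith
    have hDne : om1 γ t - om2 γ t ≠ 0 := by
      rw [om1_sub_om2]
      have := (sqrt_sQ_bounds hγ ht3 ht2).1
      linarith
    have h1 := hasDerivAt_Cx_e (x := x) t hsQne hDne hc.ne'
    have hi : HasDerivAt (fun e : ℝ => x - τ/e) (τ/t^2) t := by
      have := ((hasDerivAt_const t τ).div (hasDerivAt_id t) ht3.ne').const_sub x
      refine this.congr_deriv ?_
      simp only [id_eq]; field_simp; ring
    have hFKc : HasDerivAt (fun e : ℝ => FK K (x - τ/e)) (K (x - τ/t) * (τ/t^2)) t := by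
      have := (FK_hasDeriv hK hρ hdec (x - τ/t)).comp t hi
      exact this
    have hGd : HasDerivAt (fun e : ℝ => FK K x - FK K (x - τ/e))
        (-(K (x - τ/t) * (τ/t^2))) t := hFKc.const_sub (FK K x)
    have := h1.mul hGd
    refine this.congr_deriv ?_
    ring

omit hK hα hρ hdec hτ hc hγ in
lemma aux_decay {b : ℝ} (hb : 0 < b) (n : ℕ) :
    Tendsto (fun u : ℝ => u^n * Real.exp (-b*u)) atTop (𝓝 0) := by
  simpa [Real.rpow_natCast] using tendsto_rpow_mul_exp_neg_mul_atTop_nhds_zero n b hb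

omit hK hα hρ hdec hc hγ in
lemma tendsto_tau_div : Tendsto (fun ε : ℝ => τ/ε) (𝓝[>] (0:ℝ)) atTop := by
  have h := tendsto_inv_nhdsGT_zero (𝕜 := ℝ)
  have := h.const_mul_atTop hτ
  simpa [div_eq_mul_inv] using this

omit hK hα hρ hdec hc hγ in
lemma tendsto_shift_atBot (x : ℝ) : Tendsto (fun ε : ℝ => x - τ/ε) (𝓝[>] (0:ℝ)) atBot := by
  have h1 := (tendsto_neg_atTop_atBot (G := ℝ)).comp (tendsto_tau_div hτ)
  have := tendsto_atBot_add_const_left _ x h1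
  simpa [sub_eq_add_neg, Function.comp] using this

omit hK hα hdec hτ hc hγ in
lemma exp_intIio : ∫ x in Iio (0:ℝ), Real.exp (ρ*x) = 1/ρ := by
  rw [← integral_Iic_eq_integral_Iio, exp_integral_Iic hρ]
  simp

lemma lim_tau :
    Tendsto (fun ε => ∫ x in Iio (0:ℝ), Cx γ x c ε * ((1/ε) * K (x - τ/ε)))
      (𝓝[>] (0:ℝ)) (𝓝 0) := by
  have hsq : Tendsto (fun ε : ℝ => (4/c)*((1/ε)*(α*Real.exp (-ρ*(τ/ε))))*(1/ρ))
      (𝓝[>] (0:ℝ)) (𝓝 0) := by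
    have h1 := (aux_decay hρ 1).comp (tendsto_tau_div hτ)
    have h2 : Tendsto (fun ε : ℝ => (4*α/(c*ρ*τ))*((τ/ε)^1 * Real.exp (-ρ*(τ/ε))))
        (𝓝[>] (0:ℝ)) (𝓝 0) := by
      simpa using h1.const_mul (4*α/(c*ρ*τ))
    apply h2.congr
    intro ε
    have hτ' := hτ.ne'
    by_cases hε : ε = 0
    · simp [hε]
    · rw [pow_one]
      field_simp
  apply squeeze_zero_norm' ?_ hsq
  filter_upwards [(Ioo_mem_nhdsGT_of_mem (Set.mem_Ico.2 ⟨le_refl (0:ℝ), eps1_pos hγ⟩) :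
    Ioo (0:ℝ) (eps1 γ) ∈ 𝓝[>] (0:ℝ))] with ε hεm
  obtain ⟨hε0, hε1⟩ := hεm
  have hb0 : IntegrableOn
      (fun x => (4/c)*((1/ε)*(α*Real.exp (-ρ*(τ/ε))))*Real.exp (ρ*x)) (Iic (0:ℝ)) :=
    (expIic hρ 0).const_mul _
  have hbint := hb0.mono_set Iio_subset_Iic_self
  have hle : ‖∫ x in Iio (0:ℝ), Cx γ x c ε * ((1/ε) * K (x - τ/ε))‖
      ≤ ∫ x in Iio (0:ℝ), (4/c)*((1/ε)*(α*Real.exp (-ρ*(τ/ε))))*Real.exp (ρ*x) := by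
    apply norm_integral_le_of_norm_le hbint
    rw [ae_restrict_iff' measurableSet_Iio]
    apply ae_of_all
    intro x hx
    have hx0 : x ≤ 0 := le_of_lt hx
    have hshift : x - τ/ε ≤ 0 := by
      have : 0 ≤ τ/ε := by positivity
      linarith
    have hKb : |K (x - τ/ε)| ≤ α*Real.exp (-ρ*(τ/ε))*Real.exp (ρ*x) := by
      have h2' : -ρ * |x - τ/ε| = ρ * (x - τ/ε) := by
        rw [abs_of_nonpos hshift]; ring
      have h3 := hdec (x - τ/ε)
      rw [h2'] at h3
      apply h3.trans_eq
      rw [mul_assoc, ← Real.exp_add]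
      have harg : -ρ*(τ/ε) + ρ*x = ρ * (x - τ/ε) := by ring
      rw [harg]
    rw [Real.norm_eq_abs]
    have := amul (Cx_abs_le hγ hε0 hε1 hx0 hc)
      (amul (by rw [abs_of_pos (by positivity : (0:ℝ) < 1/ε)] : |1/ε| ≤ 1/ε) hKb)
    apply this.trans_eq
    ring
  refine le_trans hle (le_of_eq ?_)
  rw [integral_const_mul, exp_intIio hρ]

lemma lim_c :
    Tendsto (fun ε => ∫ x in Iio (0:ℝ), dCc γ x c ε * (FK K x - FK K (x - τ/ε)))
      (𝓝[>] (0:ℝ)) (𝓝 (∫ x in Iio (0:ℝ), dCc γ x c 0 * FK K x)) := by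
  have hcont := FK_cont hK hρ hdec
  apply tendsto_integral_filter_of_dominated_convergence
    (bound := fun x => ((4*|x|/c + 2) * (9/c^2)) * (2*(α/ρ) * Real.exp (ρ*x)))
  · apply Eventually.of_forall
    intro ε
    exact (((dCc_cont_x γ c ε).mul (hcont.sub (hcont.comp
      (continuous_id.sub continuous_const)))).aestronglyMeasurable).restrict
  · filter_upwards [(Ioo_mem_nhdsGT_of_mem (Set.mem_Ico.2 ⟨le_refl (0:ℝ), eps1_pos hγ⟩) :
      Ioo (0:ℝ) (eps1 γ) ∈ 𝓝[>] (0:ℝ))] with ε hεm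
    obtain ⟨hε0, hε1⟩ := hεm
    rw [ae_restrict_iff' measurableSet_Iio]
    apply ae_of_all
    intro x hx
    have hx0 : x ≤ 0 := le_of_lt hx
    rw [Real.norm_eq_abs]
    exact amul (dCc_abs_le hγ hε0 hε1 hx0 hc hc (by linarith) (by linarith))
      (G_abs_le hK hρ hdec hx0 (by positivity))
  · apply ((int_polyexp hρ ((4/c)*(9/c^2)*(2*(α/ρ))) (2*(9/c^2)*(2*(α/ρ)))).congr ?_)
    apply ae_of_all
    intro x
    ring
  · apply ae_of_all
    intro x
    have h1 := tendsto_dCc_zero γ x c hc.ne'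
    have h2 : Tendsto (fun ε : ℝ => FK K x - FK K (x - τ/ε)) (𝓝[>] (0:ℝ)) (𝓝 (FK K x)) := by
      have h3 := (FK_tendsto hK hα hρ hdec).comp (tendsto_shift_atBot hτ x)
      have := (tendsto_const_nhds (x := FK K x) (f := 𝓝[>] (0:ℝ))).sub h3
      simpa using this
    simpa using h1.mul h2

lemma lim_e_part1 :
    Tendsto (fun ε => ∫ x in Iio (0:ℝ), dCe γ x c ε * (FK K x - FK K (x - τ/ε)))
      (𝓝[>] (0:ℝ)) (𝓝 (∫ x in Iio (0:ℝ), dCe γ x c 0 * FK K x)) := by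
  have hcont := FK_cont hK hρ hdec
  apply tendsto_integral_filter_of_dominated_convergence
    (bound := fun x => ((2*γ+2)*(6+2*|x|/c)*3/c) * (2*(α/ρ) * Real.exp (ρ*x)))
  · apply Eventually.of_forall
    intro ε
    exact (((dCe_cont_x γ c ε).mul (hcont.sub (hcont.comp
      (continuous_id.sub continuous_const)))).aestronglyMeasurable).restrict
  · filter_upwards [(Ioo_mem_nhdsGT_of_mem (Set.mem_Ico.2 ⟨le_refl (0:ℝ), eps1_pos hγ⟩) :
      Ioo (0:ℝ) (eps1 γ) ∈ 𝓝[>] (0:ℝ))] with ε hεm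
    obtain ⟨hε0, hε1⟩ := hεm
    rw [ae_restrict_iff' measurableSet_Iio]
    apply ae_of_all
    intro x hx
    have hx0 : x ≤ 0 := le_of_lt hx
    rw [Real.norm_eq_abs]
    exact amul (dCe_abs_le hγ hε0 hε1 hx0 hc) (G_abs_le hK hρ hdec hx0 (by positivity))
  · apply ((int_polyexp hρ ((2*γ+2)*(2/c)*(3/c)*(2*(α/ρ))) ((2*γ+2)*6*(3/c)*(2*(α/ρ)))).congr ?_)
    apply ae_of_all
    intro x
    ring
  · apply ae_of_all
    intro x
    have h1 := tendsto_dCe_zero γ x c hc.ne'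
    have h2 : Tendsto (fun ε : ℝ => FK K x - FK K (x - τ/ε)) (𝓝[>] (0:ℝ)) (𝓝 (FK K x)) := by
      have h3 := (FK_tendsto hK hα hρ hdec).comp (tendsto_shift_atBot hτ x)
      have := (tendsto_const_nhds (x := FK K x) (f := 𝓝[>] (0:ℝ))).sub h3
      simpa using this
    simpa using h1.mul h2

lemma lim_e_part2 :
    Tendsto (fun ε => ∫ x in Iio (0:ℝ), Cx γ x c ε * (K (x - τ/ε) * (τ/ε^2)))
      (𝓝[>] (0:ℝ)) (𝓝 0) := by
  have hsq : Tendsto (fun ε : ℝ => (4/c)*(α*Real.exp (-ρ*(τ/ε))*(τ/ε^2))*(1/ρ))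
      (𝓝[>] (0:ℝ)) (𝓝 0) := by
    have h1 := (aux_decay hρ 2).comp (tendsto_tau_div hτ)
    have h2 : Tendsto (fun ε : ℝ => (4*α/(c*ρ*τ))*((τ/ε)^2 * Real.exp (-ρ*(τ/ε))))
        (𝓝[>] (0:ℝ)) (𝓝 0) := by
      simpa using h1.const_mul (4*α/(c*ρ*τ))
    apply h2.congr
    intro ε
    have hτ' := hτ.ne'
    by_cases hε : ε = 0
    · simp [hε]
    · field_simp
  apply squeeze_zero_norm' ?_ hsq
  filter_upwards [(Ioo_mem_nhdsGT_of_mem (Set.mem_Ico.2 ⟨le_refl (0:ℝ), eps1_pos hγ⟩) :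
    Ioo (0:ℝ) (eps1 γ) ∈ 𝓝[>] (0:ℝ))] with ε hεm
  obtain ⟨hε0, hε1⟩ := hεm
  have hb0 : IntegrableOn
      (fun x => (4/c)*(α*Real.exp (-ρ*(τ/ε))*(τ/ε^2))*Real.exp (ρ*x)) (Iic (0:ℝ)) :=
    (expIic hρ 0).const_mul _
  have hbint := hb0.mono_set Iio_subset_Iic_self
  have hle : ‖∫ x in Iio (0:ℝ), Cx γ x c ε * (K (x - τ/ε) * (τ/ε^2))‖
      ≤ ∫ x in Iio (0:ℝ), (4/c)*(α*Real.exp (-ρ*(τ/ε))*(τ/ε^2))*Real.exp (ρ*x) := by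
    apply norm_integral_le_of_norm_le hbint
    rw [ae_restrict_iff' measurableSet_Iio]
    apply ae_of_all
    intro x hx
    have hx0 : x ≤ 0 := le_of_lt hx
    have hshift : x - τ/ε ≤ 0 := by
      have : 0 ≤ τ/ε := by positivity
      linarith
    have hKb : |K (x - τ/ε)| ≤ α*Real.exp (-ρ*(τ/ε))*Real.exp (ρ*x) := by
      have h2' : -ρ * |x - τ/ε| = ρ * (x - τ/ε) := by
        rw [abs_of_nonpos hshift]; ring
      have h3 := hdec (x - τ/ε)
      rw [h2'] at h3
      apply h3.trans_eq
      rw [mul_assoc, ← Real.exp_add]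
      have harg : -ρ*(τ/ε) + ρ*x = ρ * (x - τ/ε) := by ring
      rw [harg]
    rw [Real.norm_eq_abs]
    have := amul (Cx_abs_le hγ hε0 hε1 hx0 hc)
      (amul hKb (by rw [abs_of_pos (by positivity : (0:ℝ) < τ/ε^2)] : |τ/ε^2| ≤ τ/ε^2))
    apply this.trans_eq
    ring
  refine le_trans hle (le_of_eq ?_)
  rw [integral_const_mul, exp_intIio hρ]

omit hK hα hρ hdec hτ hγ in
lemma abs_exp_xc {x : ℝ} (hx : x ≤ 0) : |Real.exp (x/c)| ≤ 1 := by
  rw [Real.abs_exp, Real.exp_le_one_iff]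
  exact div_nonpos_of_nonpos_of_nonneg hx hc.le

omit hK hα hρ hdec hτ hγ in
lemma dCc_zero_abs {x : ℝ} (hx : x ≤ 0) : |dCc γ x c 0| ≤ (1/c^3)*|x| + 1/c^2 := by
  rw [dCc_zero γ x c hc.ne', abs_div, abs_neg, abs_mul,
    abs_of_pos (by positivity : (0:ℝ) < c^2)]
  rw [div_le_iff₀ (by positivity : (0:ℝ) < c^2)]
  have h1 : |1 + x/c| ≤ 1 + |x|/c := by
    apply (abs_add_le _ _).trans
    rw [abs_one, abs_div, abs_of_pos hc]
  have h2 : |Real.exp (x/c)| ≤ 1 := by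
    rw [Real.abs_exp, Real.exp_le_one_iff]
    exact div_nonpos_of_nonpos_of_nonneg hx hc.le
  have h3 : |1 + x/c| * |Real.exp (x/c)| ≤ (1 + |x|/c) * 1 :=
    mul_le_mul h1 h2 (abs_nonneg _) (by positivity)
  apply h3.trans
  rw [mul_one]
  have hgoal : ((1/c^3)*|x| + 1/c^2) * c^2 = |x|/c + 1 := by field_simp
  rw [hgoal]
  linarith

omit hK hα hρ hdec hτ hγ in
lemma dCe_zero_abs {x : ℝ} (hx : x ≤ 0) : |dCe γ x c 0| ≤ (1/c^2)*|x| + 2/c := by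
  rw [dCe_zero γ x c hc.ne', abs_div, abs_of_pos hc, div_le_iff₀ hc]
  have h2 : |Real.exp (x/c)| ≤ 1 := by
    rw [Real.abs_exp, Real.exp_le_one_iff]
    exact div_nonpos_of_nonpos_of_nonneg hx hc.le
  have h1 : |1 - x/c| ≤ 1 + |x|/c := by
    apply (abs_sub _ _).trans
    rw [abs_one, abs_div, abs_of_pos hc]
  have h3 : |(1 - x/c) * Real.exp (x/c)| ≤ (1 + |x|/c) * 1 := amul h1 h2
  have h4 : |(1 - x/c) * Real.exp (x/c) - 1| ≤ (1 + |x|/c) * 1 + 1 := by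
    apply (abs_sub _ _).trans
    rw [abs_one]
    linarith
  apply h4.trans
  have hgoal : ((1/c^2)*|x| + 2/c) * c = |x|/c + 2 := by field_simp
  rw [hgoal]
  linarith

lemma ibp_c :
    ∫ x in Iio (0:ℝ), dCc γ x c 0 * FK K x
      = (1/c^2) * ∫ x in Iio (0:ℝ), x * Real.exp (x/c) * K x := by
  have hcont := FK_cont hK hρ hdec
  have hexp : ∀ x : ℝ, HasDerivAt (fun x : ℝ => Real.exp (x/c))
      (Real.exp (x/c) * (1/c)) x := fun x => ((hasDerivAt_id x).div_const c).exp
  have hu : ∀ x : ℝ, HasDerivAt (fun x : ℝ => -(x/c^2) * Real.exp (x/c)) (dCc γ x c 0) x := by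
    intro x
    have h1 : HasDerivAt (fun x : ℝ => -(x/c^2)) (-(1/c^2)) x :=
      ((hasDerivAt_id x).div_const (c^2)).neg
    have := h1.mul (hexp x)
    refine this.congr_deriv ?_
    rw [dCc_zero γ x c hc.ne']
    field_simp
    ring
  have hderiv : ∀ x : ℝ, HasDerivAt (fun x => -(x/c^2) * Real.exp (x/c) * FK K x)
      (dCc γ x c 0 * FK K x + (-(x/c^2) * Real.exp (x/c)) * K x) x :=
    fun x => (hu x).mul (FK_hasDeriv hK hρ hdec x)
  have hint1 : IntegrableOn (fun x => dCc γ x c 0 * FK K x) (Iic (0:ℝ)) := by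
    apply int_dom_Iic ((dCc_cont_x γ c 0).mul hcont) hρ
      (A := (1/c^3)*(α/ρ)) (B := (1/c^2)*(α/ρ))
    intro x hx
    have := amul (dCc_zero_abs (γ := γ) hc hx) (FK_bound hK hρ hdec hx)
    apply this.trans_eq
    ring
  have hint2 : IntegrableOn (fun x => (-(x/c^2) * Real.exp (x/c)) * K x) (Iic (0:ℝ)) := by
    apply int_dom_Iic (by fun_prop) hρ (A := (1/c^2)*α) (B := 0)
    intro x hx
    have h1 : |(-(x/c^2)) * Real.exp (x/c)| ≤ |x|/c^2 := by
      have := amul (le_refl |(-(x/c^2))|) (abs_exp_xc hc hx)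
      apply this.trans_eq
      rw [abs_neg, abs_div, abs_of_pos (by positivity : (0:ℝ) < c^2)]
      ring
    have h2 : |K x| ≤ α * Real.exp (ρ*x) := by
      have h2' : -ρ * |x| = ρ * x := by rw [abs_of_nonpos hx]; ring
      have h3 := hdec x
      rwa [h2'] at h3
    have := amul h1 h2
    apply this.trans_eq
    ring
  have htend : Tendsto (fun x => -(x/c^2) * Real.exp (x/c) * FK K x) atBot (𝓝 0) := by
    have hg : Tendsto (fun x : ℝ => ((α/ρ)*(2/ρ)/c^2) * Real.exp (ρ/2*x)) atBot (𝓝 0) := by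
      simpa using (exp_tendsto_atBot (half_pos hρ)).const_mul ((α/ρ)*(2/ρ)/c^2)
    apply squeeze_zero_norm' ?_ hg
    · filter_upwards [eventually_le_atBot (0:ℝ)] with x hx
      have h1 : |(-(x/c^2)) * Real.exp (x/c)| ≤ |x|/c^2 := by
        have := amul (le_refl |(-(x/c^2))|) (abs_exp_xc hc hx)
        apply this.trans_eq
        rw [abs_neg, abs_div, abs_of_pos (by positivity : (0:ℝ) < c^2)]
        ring
      rw [Real.norm_eq_abs]
      have h2 := amul h1 (FK_bound hK hρ hdec hx)
      apply h2.trans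
      have h3 := abs_mul_exp_le hρ hx
      calc |x|/c^2 * (α/ρ * Real.exp (ρ*x))
          = (α/ρ)/c^2 * (|x| * Real.exp (ρ*x)) := by ring
      _ ≤ (α/ρ)/c^2 * ((2/ρ) * Real.exp (ρ/2*x)) := by
          apply mul_le_mul_of_nonneg_left h3 (by positivity)
      _ = ((α/ρ)*(2/ρ)/c^2) * Real.exp (ρ/2*x) := by ring
  have key := integral_Iic_of_hasDerivAt_of_tendsto' (a := (0:ℝ)) (m := 0)
    (fun x _ => hderiv x) (hint1.add hint2) htend
  rw [integral_add hint1 hint2] at key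
  simp only [zero_div, neg_zero, zero_mul, sub_zero] at key
  have heq : (fun x => (-(x/c^2) * Real.exp (x/c)) * K x)
      = fun x => -((1/c^2) * (x * Real.exp (x/c) * K x)) := funext fun x => by ring
  rw [heq, integral_neg, integral_const_mul] at key
  rw [← integral_Iic_eq_integral_Iio, ← integral_Iic_eq_integral_Iio]
  linarith

lemma ibp_e :
    ∫ x in Iio (0:ℝ), dCe γ x c 0 * FK K x
      = 2 * phiF K c - (1/c) * ∫ x in Iio (0:ℝ), |x| * (Real.exp (x/c) + 1) * K x := by
  have hcont := FK_cont hK hρ hdec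
  have hexp : ∀ x : ℝ, HasDerivAt (fun x : ℝ => Real.exp (x/c))
      (Real.exp (x/c) * (1/c)) x := fun x => ((hasDerivAt_id x).div_const c).exp
  have hu : ∀ x : ℝ, HasDerivAt
      (fun x : ℝ => 2*Real.exp (x/c) - (x/c)*Real.exp (x/c) - x/c) (dCe γ x c 0) x := by
    intro x
    have h1 : HasDerivAt (fun x : ℝ => 2*Real.exp (x/c)) (2*(Real.exp (x/c) * (1/c))) x :=
      (hexp x).const_mul 2
    have h2 : HasDerivAt (fun x : ℝ => (x/c)*Real.exp (x/c))
        ((1/c)*Real.exp (x/c) + (x/c)*(Real.exp (x/c) * (1/c))) x :=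
      ((hasDerivAt_id x).div_const c).mul (hexp x)
    have h3 : HasDerivAt (fun x : ℝ => x/c) (1/c) x := (hasDerivAt_id x).div_const c
    have := (h1.sub h2).sub h3
    refine this.congr_deriv ?_
    rw [dCe_zero γ x c hc.ne']
    field_simp
    ring
  have hderiv : ∀ x : ℝ, HasDerivAt
      (fun x => (2*Real.exp (x/c) - (x/c)*Real.exp (x/c) - x/c) * FK K x)
      (dCe γ x c 0 * FK K x + (2*Real.exp (x/c) - (x/c)*Real.exp (x/c) - x/c) * K x) x :=
    fun x => (hu x).mul (FK_hasDeriv hK hρ hdec x)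
  have hKb : ∀ x ≤ (0:ℝ), |K x| ≤ α * Real.exp (ρ*x) := by
    intro x hx
    have h2' : -ρ * |x| = ρ * x := by rw [abs_of_nonpos hx]; ring
    have h3 := hdec x
    rwa [h2'] at h3
  have hu2b : ∀ x ≤ (0:ℝ), |2*Real.exp (x/c) - (x/c)*Real.exp (x/c) - x/c|
      ≤ (2/c)*|x| + 2 := by
    intro x hx
    have he := abs_exp_xc hc hx
    have h1 : |2*Real.exp (x/c)| ≤ 2*1 :=
      amul (by rw [abs_of_pos]; norm_num : |(2:ℝ)| ≤ 2) he
    have h2 : |(x/c)*Real.exp (x/c)| ≤ (|x|/c)*1 :=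
      amul (by rw [abs_div, abs_of_pos hc] : |x/c| ≤ |x|/c) he
    have h3 : |x/c| ≤ |x|/c := by rw [abs_div, abs_of_pos hc]
    have h4 := (abs_sub _ _).trans (add_le_add ((abs_sub _ _).trans (add_le_add h1 h2)) h3)
    apply h4.trans
    have : 2/c*|x| = |x|/c + |x|/c := by ring
    linarith
  have hint1 : IntegrableOn (fun x => dCe γ x c 0 * FK K x) (Iic (0:ℝ)) := by
    apply int_dom_Iic ((dCe_cont_x γ c 0).mul hcont) hρ
      (A := (1/c^2)*(α/ρ)) (B := (2/c)*(α/ρ))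
    intro x hx
    have := amul (dCe_zero_abs (γ := γ) hc hx) (FK_bound hK hρ hdec hx)
    apply this.trans_eq
    ring
  have hint2 : IntegrableOn
      (fun x => (2*Real.exp (x/c) - (x/c)*Real.exp (x/c) - x/c) * K x) (Iic (0:ℝ)) := by
    apply int_dom_Iic (by fun_prop) hρ (A := (2/c)*α) (B := 2*α)
    intro x hx
    have := amul (hu2b x hx) (hKb x hx)
    apply this.trans_eq
    ring
  have htend : Tendsto (fun x => (2*Real.exp (x/c) - (x/c)*Real.exp (x/c) - x/c) * FK K x)
      atBot (𝓝 0) := by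
    have hg : Tendsto (fun x : ℝ => ((2/c)*(α/ρ)*(2/ρ) + 2*(α/ρ)) * Real.exp (ρ/2*x))
        atBot (𝓝 0) := by
      simpa using (exp_tendsto_atBot (half_pos hρ)).const_mul ((2/c)*(α/ρ)*(2/ρ) + 2*(α/ρ))
    apply squeeze_zero_norm' ?_ hg
    · filter_upwards [eventually_le_atBot (0:ℝ)] with x hx
      rw [Real.norm_eq_abs]
      have h2 := amul (hu2b x hx) (FK_bound hK hρ hdec hx)
      apply h2.trans
      have h3 := abs_mul_exp_le hρ hx
      have h5 : Real.exp (ρ*x) ≤ Real.exp (ρ/2*x) := by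
        apply Real.exp_le_exp.2
        nlinarith
      calc ((2/c)*|x| + 2) * (α/ρ * Real.exp (ρ*x))
          = (2/c)*(α/ρ) * (|x| * Real.exp (ρ*x)) + 2*(α/ρ)*Real.exp (ρ*x) := by ring
      _ ≤ (2/c)*(α/ρ) * ((2/ρ) * Real.exp (ρ/2*x)) + 2*(α/ρ)*Real.exp (ρ/2*x) := by
          apply add_le_add
          · apply mul_le_mul_of_nonneg_left h3 (by positivity)
          · apply mul_le_mul_of_nonneg_left h5 (by positivity)
      _ = ((2/c)*(α/ρ)*(2/ρ) + 2*(α/ρ)) * Real.exp (ρ/2*x) := by ring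
  have key := integral_Iic_of_hasDerivAt_of_tendsto' (a := (0:ℝ)) (m := 0)
    (fun x _ => hderiv x) (hint1.add hint2) htend
  rw [integral_add hint1 hint2] at key
  simp only [zero_div, Real.exp_zero, mul_one, zero_mul, sub_zero] at key
  -- rewrite the u₂·K integral over Iio 0 using |x| = -x
  have hsplit : ∫ x in Iic (0:ℝ), (2*Real.exp (x/c) - (x/c)*Real.exp (x/c) - x/c) * K x
      = 2 * (∫ x in Iio (0:ℝ), Real.exp (x/c) * K x)
        + (1/c) * ∫ x in Iio (0:ℝ), |x| * (Real.exp (x/c) + 1) * K x := by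
    rw [integral_Iic_eq_integral_Iio]
    have hpt : ∀ x ∈ Iio (0:ℝ), (2*Real.exp (x/c) - (x/c)*Real.exp (x/c) - x/c) * K x
        = 2 * (Real.exp (x/c) * K x) + (1/c) * (|x| * (Real.exp (x/c) + 1) * K x) := by
      intro x hx
      rw [abs_of_neg hx]
      field_simp
      ring
    rw [setIntegral_congr_fun measurableSet_Iio hpt]
    have hi1 : IntegrableOn (fun x => 2 * (Real.exp (x/c) * K x)) (Iio (0:ℝ)) := by
      apply int_dom (by fun_prop) hρ (A := 0) (B := 2*α)
      intro x hx
      have := amul (by rw [abs_of_pos]; norm_num : |(2:ℝ)| ≤ 2)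
        (amul (abs_exp_xc hc hx) (hKb x hx))
      apply this.trans_eq
      ring
    have hi2 : IntegrableOn (fun x => (1/c) * (|x| * (Real.exp (x/c) + 1) * K x)) (Iio (0:ℝ)) := by
      apply int_dom (by fun_prop) hρ (A := (1/c)*2*α) (B := 0)
      intro x hx
      have he1 : |Real.exp (x/c) + 1| ≤ 2 := by
        have := abs_exp_xc hc hx
        have hp := Real.exp_nonneg (x/c)
        rw [abs_of_pos (by positivity)]
        rw [Real.abs_exp] at this
        linarith
      have := amul (by rw [abs_of_pos (by positivity : (0:ℝ) < 1/c)] : |1/c| ≤ 1/c)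
        (amul (amul (by rw [abs_abs] : |(|x|)| ≤ |x|) he1) (hKb x hx))
      apply this.trans_eq
      ring
    rw [integral_add hi1 hi2, integral_const_mul, integral_const_mul]
  rw [hsplit] at key
  have hFK0 : FK K 0 = ∫ x in Iio (0:ℝ), K x := integral_Iic_eq_integral_Iio
  unfold phiF
  rw [← hFK0]
  rw [← integral_Iic_eq_integral_Iio (f := fun x => dCe γ x c 0 * FK K x)]
  linarith

end main

theorem statement7 (K : ℝ → ℝ)
    (hK : Continuous K)
    (hKdecay : ∃ α > (0:ℝ), ∃ ρ > (0:ℝ), ∀ x : ℝ, |K x| ≤ α * Real.exp (-ρ * |x|))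
    (hKint : (∫ x : ℝ, K x) = 1)
    (τ c γ : ℝ) (hτ : 0 < τ) (hc : 0 < c) (hγ : 0 < γ) :
    ∃ ε₀ > (0:ℝ), ∃ dτ dc de : ℝ → ℝ,
      (∀ ε ∈ Ioo (0:ℝ) ε₀,
        HasDerivAt (fun τ' => ff K γ τ' c ε) (dτ ε) τ ∧
        HasDerivAt (fun c' => ff K γ τ c' ε) (dc ε) c ∧
        HasDerivAt (fun ε' => ff K γ τ c ε') (de ε) ε) ∧
      Tendsto dτ (𝓝[>] (0:ℝ)) (𝓝 0) ∧
      Tendsto dc (𝓝[>] (0:ℝ))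
        (𝓝 ((1 / c ^ 2) * ∫ x in Iio (0:ℝ), x * Real.exp (x / c) * K x)) ∧
      Tendsto de (𝓝[>] (0:ℝ))
        (𝓝 (2 * phiF K c - (1 / c) * ∫ x in Iio (0:ℝ), |x| * (Real.exp (x / c) + 1) * K x)) := by
  obtain ⟨α, hα, ρ, hρ, hdec⟩ := hKdecay
  refine ⟨eps1 γ, eps1_pos hγ,
    (fun ε => ∫ x in Iio (0:ℝ), Cx γ x c ε * ((1/ε) * K (x - τ/ε))),
    (fun ε => ∫ x in Iio (0:ℝ), dCc γ x c ε * (FK K x - FK K (x - τ/ε))),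
    (fun ε => (∫ x in Iio (0:ℝ), dCe γ x c ε * (FK K x - FK K (x - τ/ε)))
      - ∫ x in Iio (0:ℝ), Cx γ x c ε * (K (x - τ/ε) * (τ/ε^2))),
    ?_, ?_, ?_, ?_⟩
  · intro ε hε
    exact ⟨deriv_tau hK hα hρ hdec hτ hc hγ hε.1 hε.2,
      deriv_c hK hα hρ hdec hτ hc hγ hε.1 hε.2,
      deriv_eps hK hα hρ hdec hτ hc hγ hε.1 hε.2⟩
  · exact lim_tau hK hα hρ hdec hτ hc hγ
  · have h := lim_c hK hα hρ hdec hτ hc hγ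
    rwa [ibp_c hK hα hρ hdec hτ hc hγ] at h
  · have h1 := lim_e_part1 hK hα hρ hdec hτ hc hγ
    have h2 := lim_e_part2 hK hα hρ hdec hτ hc hγ
    have h := h1.sub h2
    rw [sub_zero, ibp_e hK hα hρ hdec hτ hc hγ] at h
    exact h
end

section
/- Let γ > 0, c_f > 0 and z₀ ∈ ℝ. Let ε ↦ c_ε > 0 and ε ↦ a_ε > 0 be functions of ε > 0 with c_ε → c_f and a_ε → +∞ as ε → 0⁺, and for each small ε > 0 define U_ε, Q_ε using parameters a = a_ε and c = c_ε. Then, as ε → 0⁺: sup_{z ≤ z₀} |U_ε(z) − U_f(z)| → 0, sup_{z ≤ z₀} |U_ε'(z) − U_f'(z)| → 0, sup_{z ≤ z₀} |Q_ε(z)| → 0, and sup_{z ≤ z₀} |Q_ε'(z)| → 0. -/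
open MeasureTheory Real Filter Set Topology

namespace S14x

lemma intOn_exp_mul {s : ℝ} (hs : 0 < s) (z : ℝ) :
    IntegrableOn (fun x => Real.exp (s * x)) (Iic z) := by
  have h1 : Integrable ((Iic (s * z)).indicator Real.exp) :=
    (integrableOn_exp_Iic (s * z)).integrable_indicator measurableSet_Iic
  have h2 := (integrable_comp_mul_left_iff ((Iic (s * z)).indicator Real.exp) hs.ne').2 h1
  have h3 : (fun x => ((Iic (s * z)).indicator Real.exp) (s * x))
      = (Iic z).indicator (fun x => Real.exp (s * x)) := by
    funext x
    by_cases hx : x ≤ z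
    · rw [indicator_of_mem (mem_Iic.2 (mul_le_mul_of_nonneg_left hx hs.le)),
        indicator_of_mem (mem_Iic.2 hx)]
    · rw [indicator_of_notMem, indicator_of_notMem (by simpa using hx)]
      simp only [mem_Iic, not_le] at hx ⊢
      exact (mul_lt_mul_iff_right₀ hs).2 hx
  rw [h3] at h2
  exact (integrable_indicator_iff measurableSet_Iic).1 h2

lemma int_exp_mul {s : ℝ} (hs : 0 < s) (z : ℝ) :
    ∫ x in Iic z, Real.exp (s * x) = Real.exp (s * z) / s := by
  have hderiv : ∀ x ∈ Iic z, HasDerivAt (fun y => Real.exp (s * y) / s) (Real.exp (s * x)) x := by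
    intro x _
    have h := (((hasDerivAt_id x).const_mul s).exp).div_const s
    refine h.congr_deriv ?_
    field_simp
    rfl
  have htend : Tendsto (fun y => Real.exp (s * y) / s) atBot (𝓝 0) := by
    have h1 : Tendsto (fun y : ℝ => s * y) atBot atBot := tendsto_id.const_mul_atBot hs
    have h2 := Real.tendsto_exp_atBot.comp h1
    simpa using h2.div_const s
  have h := integral_Iic_of_hasDerivAt_of_tendsto' hderiv (intOn_exp_mul hs z) htend
  rw [h]; ring

lemma expshift (r z x : ℝ) :
    Real.exp (r * (x - z)) = Real.exp (-(r * z)) * Real.exp (r * x) := by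
  rw [← Real.exp_add]; ring_nf

lemma intOn_exp_shift {r : ℝ} (hr : 0 < r) (z : ℝ) :
    IntegrableOn (fun x => Real.exp (r * (x - z))) (Iic z) := by
  simp_rw [expshift r z]
  exact (intOn_exp_mul hr z).const_mul _

lemma int_exp_shift {r : ℝ} (hr : 0 < r) (z : ℝ) :
    ∫ x in Iic z, Real.exp (r * (x - z)) = 1 / r := by
  simp_rw [expshift r z]
  rw [integral_const_mul, int_exp_mul hr z, ← mul_div_assoc, ← Real.exp_add, neg_add_cancel,
    Real.exp_zero]

noncomputable def Faux (r : ℝ) (g : ℝ → ℝ) (z : ℝ) : ℝ :=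
  ∫ x in Iic z, Real.exp (r * (x - z)) * g x

lemma Faux_int {r Cb : ℝ} (hr : 0 < r) {g : ℝ → ℝ} (hg : Continuous g)
    (hb : ∀ x, |g x| ≤ Cb) (z : ℝ) :
    IntegrableOn (fun x => Real.exp (r * (x - z)) * g x) (Iic z) := by
  apply Integrable.mono' ((intOn_exp_shift hr z).const_mul Cb)
  · exact ((Real.continuous_exp.comp (by continuity)).mul hg).aestronglyMeasurable
  · refine ae_of_all _ fun x => ?_
    rw [norm_mul, Real.norm_eq_abs, Real.norm_eq_abs, Real.abs_exp]
    calc Real.exp (r * (x - z)) * |g x| ≤ Real.exp (r * (x - z)) * Cb :=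
          mul_le_mul_of_nonneg_left (hb x) (Real.exp_pos _).le
      _ = Cb * Real.exp (r * (x - z)) := mul_comm _ _

lemma Faux_le {r ρ D : ℝ} (hr : 0 < r) (hρ : 0 < ρ) {g : ℝ → ℝ}
    (hge : ∀ x, |g x| ≤ D * Real.exp (ρ * x)) (z : ℝ) :
    |Faux r g z| ≤ D * Real.exp (ρ * z) / (r + ρ) := by
  have hD : 0 ≤ D := by
    have h := (abs_nonneg (g 0)).trans (hge 0)
    simpa using h
  have hrρ : (0:ℝ) < r + ρ := by linarith
  have hdom : IntegrableOn (fun x => (D * Real.exp (-(r * z))) * Real.exp ((r + ρ) * x)) (Iic z) :=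
    (intOn_exp_mul hrρ z).const_mul _
  have hbd : ∀ x, ‖Real.exp (r * (x - z)) * g x‖ ≤
      (D * Real.exp (-(r * z))) * Real.exp ((r + ρ) * x) := by
    intro x
    rw [norm_mul, Real.norm_eq_abs, Real.norm_eq_abs, Real.abs_exp]
    calc Real.exp (r * (x - z)) * |g x| ≤ Real.exp (r * (x - z)) * (D * Real.exp (ρ * x)) :=
          mul_le_mul_of_nonneg_left (hge x) (Real.exp_pos _).le
      _ = (D * Real.exp (-(r * z))) * (Real.exp (r * x) * Real.exp (ρ * x)) := by
          rw [expshift r z x]; ring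
      _ = (D * Real.exp (-(r * z))) * Real.exp ((r + ρ) * x) := by
          rw [← Real.exp_add]; congr 1; ring
  have hnorm := norm_integral_le_of_norm_le hdom (ae_of_all _ hbd)
  rw [Real.norm_eq_abs] at hnorm
  have hval : ∫ x in Iic z, (D * Real.exp (-(r * z))) * Real.exp ((r + ρ) * x)
      = D * Real.exp (ρ * z) / (r + ρ) := by
    rw [integral_const_mul, int_exp_mul hrρ z]
    rw [show D * Real.exp (-(r * z)) * (Real.exp ((r + ρ) * z) / (r + ρ))
        = D * (Real.exp (-(r * z)) * Real.exp ((r + ρ) * z)) / (r + ρ) by ring,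
      ← Real.exp_add, show -(r * z) + (r + ρ) * z = ρ * z by ring]
  rw [hval] at hnorm
  exact hnorm

lemma Faux_le' {r ρ D z z₀ : ℝ} (hr : 0 < r) (hρ : 0 < ρ) {g : ℝ → ℝ}
    (hge : ∀ x, |g x| ≤ D * Real.exp (ρ * x)) (hz : z ≤ z₀) :
    |Faux r g z| ≤ D * Real.exp (ρ * z₀) / ρ := by
  have hD : 0 ≤ D := by
    have h := (abs_nonneg (g 0)).trans (hge 0)
    simpa using h
  refine (Faux_le hr hρ hge z).trans ?_
  apply div_le_div₀ (by positivity)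
  · exact mul_le_mul_of_nonneg_left (Real.exp_le_exp.2 (mul_le_mul_of_nonneg_left hz hρ.le)) hD
  · exact hρ
  · linarith

lemma Faux_rsub {r r' Cb : ℝ} (hr : 0 < r) {g : ℝ → ℝ} (hg : Continuous g)
    (hb : ∀ x, |g x| ≤ Cb) (hrr : r ≤ r') (z : ℝ) :
    |Faux r g z - Faux r' g z| ≤ Cb * (1 / r - 1 / r') := by
  have hr' : 0 < r' := lt_of_lt_of_le hr hrr
  have hsub : Faux r g z - Faux r' g z
      = ∫ x in Iic z, (Real.exp (r * (x - z)) - Real.exp (r' * (x - z))) * g x := by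
    unfold Faux
    rw [← integral_sub (Faux_int hr hg hb z) (Faux_int hr' hg hb z)]
    congr 1; funext x; ring
  have hdom : IntegrableOn
      (fun x => Cb * (Real.exp (r * (x - z)) - Real.exp (r' * (x - z)))) (Iic z) :=
    ((intOn_exp_shift hr z).sub (intOn_exp_shift hr' z)).const_mul Cb
  have hbd : ∀ᵐ x ∂(volume.restrict (Iic z)),
      ‖(Real.exp (r * (x - z)) - Real.exp (r' * (x - z))) * g x‖ ≤
        Cb * (Real.exp (r * (x - z)) - Real.exp (r' * (x - z))) := by
    refine (ae_restrict_iff' measurableSet_Iic).2 (ae_of_all _ fun x hx => ?_)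
    have ht : x - z ≤ 0 := sub_nonpos.2 hx
    have he : Real.exp (r' * (x - z)) ≤ Real.exp (r * (x - z)) :=
      Real.exp_le_exp.2 (mul_le_mul_of_nonpos_right hrr ht)
    rw [norm_mul, Real.norm_eq_abs, Real.norm_eq_abs, abs_of_nonneg (sub_nonneg.2 he)]
    calc (Real.exp (r * (x - z)) - Real.exp (r' * (x - z))) * |g x|
        ≤ (Real.exp (r * (x - z)) - Real.exp (r' * (x - z))) * Cb :=
          mul_le_mul_of_nonneg_left (hb x) (sub_nonneg.2 he)
      _ = Cb * (Real.exp (r * (x - z)) - Real.exp (r' * (x - z))) := mul_comm _ _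
  have hnorm := norm_integral_le_of_norm_le hdom hbd
  rw [Real.norm_eq_abs] at hnorm
  rw [hsub]
  refine hnorm.trans_eq ?_
  rw [integral_const_mul, integral_sub (intOn_exp_shift hr z) (intOn_exp_shift hr' z),
    int_exp_shift hr z, int_exp_shift hr' z]

lemma Faux_rdiff {r r' Cb : ℝ} (hr : 0 < r) (hr' : 0 < r') {g : ℝ → ℝ} (hg : Continuous g)
    (hb : ∀ x, |g x| ≤ Cb) (z : ℝ) :
    |Faux r g z - Faux r' g z| ≤ Cb * |1 / r - 1 / r'| := by
  rcases le_total r r' with h | h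
  · have h' : |1 / r - 1 / r'| = 1 / r - 1 / r' :=
      abs_of_nonneg (by have := one_div_le_one_div_of_le hr h; linarith)
    rw [h']
    exact Faux_rsub hr hg hb h z
  · have h' : |1 / r - 1 / r'| = 1 / r' - 1 / r :=
      abs_of_nonpos (by have := one_div_le_one_div_of_le hr' h; linarith) |>.trans (by ring)
    rw [h', abs_sub_comm]
    exact Faux_rsub hr' hg hb h z

lemma Faux_gsub {r Cb Cb' : ℝ} (hr : 0 < r) {g g' : ℝ → ℝ} (hg : Continuous g)
    (hg' : Continuous g') (hb : ∀ x, |g x| ≤ Cb) (hb' : ∀ x, |g' x| ≤ Cb') (z : ℝ) :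
    Faux r g z - Faux r g' z = Faux r (fun x => g x - g' x) z := by
  unfold Faux
  rw [← integral_sub (Faux_int hr hg hb z) (Faux_int hr hg' hb' z)]
  congr 1; funext x; ring

lemma Faux_hasDerivAt {r Cb : ℝ} (hr : 0 < r) {g : ℝ → ℝ} (hg : Continuous g)
    (hb : ∀ x, |g x| ≤ Cb) (z : ℝ) :
    HasDerivAt (Faux r g) (g z - r * Faux r g z) z := by
  set G : ℝ → ℝ := fun w => ∫ x in Iic w, Real.exp (r * x) * g x with hGdef
  have hgcont : Continuous fun x => Real.exp (r * x) * g x :=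
    (Real.continuous_exp.comp (continuous_const.mul continuous_id)).mul hg
  have hint : ∀ w : ℝ, IntegrableOn (fun x => Real.exp (r * x) * g x) (Iic w) := by
    intro w
    apply Integrable.mono' ((intOn_exp_mul hr w).const_mul Cb)
    · exact hgcont.aestronglyMeasurable
    · refine ae_of_all _ fun x => ?_
      rw [norm_mul, Real.norm_eq_abs, Real.norm_eq_abs, Real.abs_exp]
      calc Real.exp (r * x) * |g x| ≤ Real.exp (r * x) * Cb :=
            mul_le_mul_of_nonneg_left (hb x) (Real.exp_pos _).le
        _ = Cb * Real.exp (r * x) := mul_comm _ _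
  have hFeq : Faux r g = fun w => Real.exp (-(r * w)) * G w := by
    funext w
    unfold Faux
    simp_rw [expshift r w, mul_assoc]
    rw [integral_const_mul]
  have hG : HasDerivAt G (Real.exp (r * z) * g z) z := by
    have h0 : G = fun u => G 0 + ∫ x in (0:ℝ)..u, Real.exp (r * x) * g x := by
      funext u
      rw [← intervalIntegral.integral_Iic_sub_Iic (hint 0) (hint u)]
      simp [hGdef]
    rw [h0]
    exact (intervalIntegral.integral_hasDerivAt_right (hgcont.intervalIntegrable _ _)
      (hgcont.stronglyMeasurableAtFilter _ _) hgcont.continuousAt).const_add _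
  have h1 : HasDerivAt (fun w => Real.exp (-(r * w))) (Real.exp (-(r * z)) * (-r)) z := by
    have := ((hasDerivAt_id z).const_mul (-r)).exp
    simpa [neg_mul, mul_comm] using this
  have h2 := h1.mul hG
  have h3 : HasDerivAt (fun w => Real.exp (-(r * w)) * G w)
      (g z - r * (Real.exp (-(r * z)) * G z)) z := by
    refine h2.congr_deriv ?_
    have hc : Real.exp (-(r * z)) * Real.exp (r * z) = 1 := by rw [← Real.exp_add]; simp
    linear_combination (g z) * hc
  have hFz : Faux r g z = Real.exp (-(r * z)) * G z := congrFun hFeq z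
  rw [hFz, hFeq]
  exact h3


section Klemmas

variable {K : ℝ → ℝ} {α ρ : ℝ}

lemma Kintegrable (hK : Continuous K) (hα : 0 < α) (hρ : 0 < ρ)
    (hdec : ∀ x, |K x| ≤ α * Real.exp (-ρ * |x|)) : Integrable K := by
  have hdom : Integrable (fun x => α * Real.exp (-ρ * |x|)) := by
    have h1 : IntegrableOn (fun x => α * Real.exp (-ρ * |x|)) (Iic 0) := by
      refine IntegrableOn.congr_fun ((intOn_exp_mul hρ 0).const_mul α) ?_ measurableSet_Iic
      intro x hx
      have hx' : |x| = -x := abs_of_nonpos hx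
      show α * Real.exp (ρ * x) = α * Real.exp (-ρ * |x|)
      rw [hx']; ring_nf
    have h2 : IntegrableOn (fun x => α * Real.exp (-ρ * |x|)) (Ioi 0) := by
      refine IntegrableOn.congr_fun ((exp_neg_integrableOn_Ioi 0 hρ).const_mul α) ?_
        measurableSet_Ioi
      intro x hx
      have hx' : |x| = x := abs_of_pos hx
      show α * Real.exp (-ρ * x) = α * Real.exp (-ρ * |x|)
      rw [hx']
    have h3 := h1.union h2
    rwa [Iic_union_Ioi, integrableOn_univ] at h3
  exact hdom.mono' hK.aestronglyMeasurable (ae_of_all _ fun x => by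
    rw [Real.norm_eq_abs]; exact hdec x)

lemma Kabs_core (hK : Continuous K) (hα : 0 < α) (hρ : 0 < ρ)
    (hdec : ∀ x, |K x| ≤ α * Real.exp (-ρ * |x|)) (x : ℝ) :
    (∫ y in Iic x, |K y|) ≤ 2 * (α / ρ) * Real.exp (ρ * min x 0) := by
  have hKi : Integrable (fun y => |K y|) := (Kintegrable hK hα hρ hdec).abs
  have key0 : ∀ x ≤ (0:ℝ), (∫ y in Iic x, |K y|) ≤ α / ρ * Real.exp (ρ * x) := by
    intro x hx
    have hmono : (∫ y in Iic x, |K y|) ≤ ∫ y in Iic x, α * Real.exp (ρ * y) := by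
      refine setIntegral_mono_on hKi.integrableOn ((intOn_exp_mul hρ x).const_mul α)
        measurableSet_Iic ?_
      intro y hy
      have hy' : |y| = -y := abs_of_nonpos (le_trans hy hx)
      calc |K y| ≤ α * Real.exp (-ρ * |y|) := hdec y
        _ = α * Real.exp (ρ * y) := by rw [hy']; ring_nf
    rw [integral_const_mul, int_exp_mul hρ x] at hmono
    calc (∫ y in Iic x, |K y|) ≤ α * (Real.exp (ρ * x) / ρ) := hmono
      _ = α / ρ * Real.exp (ρ * x) := by ring
  rcases le_or_gt x 0 with hx | hx
  · rw [min_eq_left hx]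
    have := key0 x hx
    nlinarith [Real.exp_pos (ρ * x), div_pos hα hρ]
  · rw [min_eq_right hx.le]
    have hsplit : (∫ y in Iic x, |K y|) = (∫ y in Iic 0, |K y|) + ∫ y in Ioc 0 x, |K y| := by
      rw [← setIntegral_union (Iic_disjoint_Ioc le_rfl) measurableSet_Ioc
        hKi.integrableOn hKi.integrableOn, Iic_union_Ioc_eq_Iic hx.le]
    have h1 : (∫ y in Iic 0, |K y|) ≤ α / ρ := by
      have := key0 0 le_rfl
      simpa using this
    have h2 : (∫ y in Ioc 0 x, |K y|) ≤ α / ρ := by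
      have hIoi : IntegrableOn (fun y => α * Real.exp (-ρ * y)) (Ioi 0) :=
        (exp_neg_integrableOn_Ioi 0 hρ).const_mul α
      have hm : (∫ y in Ioc 0 x, |K y|) ≤ ∫ y in Ioc 0 x, α * Real.exp (-ρ * y) := by
        refine setIntegral_mono_on hKi.integrableOn (hIoi.mono_set Ioc_subset_Ioi_self)
          measurableSet_Ioc ?_
        intro y hy
        have hy' : |y| = y := abs_of_pos hy.1
        calc |K y| ≤ α * Real.exp (-ρ * |y|) := hdec y
          _ = α * Real.exp (-ρ * y) := by rw [hy']
      have hm2 : (∫ y in Ioc 0 x, α * Real.exp (-ρ * y)) ≤ ∫ y in Ioi 0, α * Real.exp (-ρ * y) := by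
        refine setIntegral_mono_set hIoi (ae_of_all _ fun y => by positivity)
          (HasSubset.Subset.eventuallyLE Ioc_subset_Ioi_self)
      have hval : (∫ y in Ioi 0, α * Real.exp (-ρ * y)) = α / ρ := by
        rw [integral_const_mul]
        have hcn := integral_comp_neg_Ioi (0:ℝ) (fun y => Real.exp (ρ * y))
        have he : ∀ y : ℝ, Real.exp (-ρ * y) = Real.exp (ρ * (-y)) := fun y => by ring_nf
        calc α * ∫ y in Ioi (0:ℝ), Real.exp (-ρ * y)
            = α * ∫ y in Ioi (0:ℝ), Real.exp (ρ * (-y)) := by simp_rw [he]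
          _ = α * ∫ y in Iic (-(0:ℝ)), Real.exp (ρ * y) := by rw [hcn]
          _ = α / ρ := by rw [neg_zero, int_exp_mul hρ 0, mul_zero, Real.exp_zero]; ring
      linarith
    rw [hsplit]
    simp only [mul_zero, Real.exp_zero, mul_one]
    linarith

lemma KI_le (hK : Continuous K) (hα : 0 < α) (hρ : 0 < ρ)
    (hdec : ∀ x, |K x| ≤ α * Real.exp (-ρ * |x|)) (x : ℝ) :
    |∫ y in Iic x, K y| ≤ 2 * (α / ρ) * Real.exp (ρ * min x 0) := by
  refine le_trans ?_ (Kabs_core hK hα hρ hdec x)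
  have := norm_integral_le_integral_norm (μ := volume.restrict (Iic x)) K
  simpa [Real.norm_eq_abs] using this

lemma gA_le (hK : Continuous K) (hα : 0 < α) (hρ : 0 < ρ)
    (hdec : ∀ x, |K x| ≤ α * Real.exp (-ρ * |x|)) {a : ℝ} (ha : 0 < a) (x : ℝ) :
    |∫ y in (x - a)..x, K y| ≤ 2 * (α / ρ) * Real.exp (ρ * min x 0) := by
  have hKi : Integrable (fun y => |K y|) := (Kintegrable hK hα hρ hdec).abs
  have h1 : |∫ y in (x - a)..x, K y| ≤ ∫ y in (x - a)..x, |K y| := by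
    have := intervalIntegral.norm_integral_le_integral_norm (f := K) (μ := volume)
      (a := x - a) (b := x) (by linarith)
    simpa [Real.norm_eq_abs] using this
  have h2 : (∫ y in (x - a)..x, |K y|) = ∫ y in Ioc (x - a) x, |K y| :=
    intervalIntegral.integral_of_le (by linarith)
  have h3 : (∫ y in Ioc (x - a) x, |K y|) ≤ ∫ y in Iic x, |K y| :=
    setIntegral_mono_set hKi.integrableOn (ae_of_all _ fun y => abs_nonneg _)
      (HasSubset.Subset.eventuallyLE Ioc_subset_Iic_self)
  calc |∫ y in (x - a)..x, K y| ≤ ∫ y in Ioc (x - a) x, |K y| := h2 ▸ h1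
    _ ≤ ∫ y in Iic x, |K y| := h3
    _ ≤ 2 * (α / ρ) * Real.exp (ρ * min x 0) := Kabs_core hK hα hρ hdec x

lemma min_exp_le_exp (hρ : 0 < ρ) (x : ℝ) : Real.exp (ρ * min x 0) ≤ Real.exp (ρ * x) :=
  Real.exp_le_exp.2 (mul_le_mul_of_nonneg_left (min_le_left x 0) hρ.le)

lemma min_exp_le_one (hρ : 0 < ρ) (x : ℝ) : Real.exp (ρ * min x 0) ≤ 1 := by
  rw [show (1:ℝ) = Real.exp 0 by simp]
  exact Real.exp_le_exp.2 (mul_nonpos_of_nonneg_of_nonpos hρ.le (min_le_right x 0))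

lemma gA_sub_KI (hK : Continuous K) (hα : 0 < α) (hρ : 0 < ρ)
    (hdec : ∀ x, |K x| ≤ α * Real.exp (-ρ * |x|)) {a : ℝ} (ha : 0 < a) (x : ℝ) :
    |(∫ y in (x - a)..x, K y) - ∫ y in Iic x, K y| ≤
      2 * (α / ρ) * Real.exp (-(ρ * a)) * Real.exp (ρ * x) := by
  have hKint : Integrable K := Kintegrable hK hα hρ hdec
  have he : (∫ y in (x - a)..x, K y) = (∫ y in Iic x, K y) - ∫ y in Iic (x - a), K y :=
    (intervalIntegral.integral_Iic_sub_Iic hKint.integrableOn hKint.integrableOn).symm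
  rw [he]
  rw [show (∫ y in Iic x, K y) - (∫ y in Iic (x - a), K y) - ∫ y in Iic x, K y
    = -(∫ y in Iic (x - a), K y) by ring, abs_neg]
  calc |∫ y in Iic (x - a), K y| ≤ 2 * (α / ρ) * Real.exp (ρ * min (x - a) 0) :=
        KI_le hK hα hρ hdec (x - a)
    _ ≤ 2 * (α / ρ) * Real.exp (ρ * (x - a)) := by
        have := min_exp_le_exp hρ (x - a)
        have hnn : (0:ℝ) ≤ 2 * (α / ρ) := by positivity
        nlinarith
    _ = 2 * (α / ρ) * Real.exp (-(ρ * a)) * Real.exp (ρ * x) := by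
        have hh : Real.exp (ρ * (x - a)) = Real.exp (-(ρ * a)) * Real.exp (ρ * x) := by
          rw [← Real.exp_add]; congr 1; ring
        rw [hh]; ring

lemma KI_hasDerivAt (hK : Continuous K) (hKint : Integrable K) (w : ℝ) :
    HasDerivAt (fun u => ∫ y in Iic u, K y) (K w) w := by
  have heq : (fun u => ∫ y in Iic u, K y)
      = fun u => (∫ y in Iic 0, K y) + ∫ y in (0:ℝ)..u, K y := by
    funext u
    rw [← intervalIntegral.integral_Iic_sub_Iic hKint.integrableOn hKint.integrableOn]
    ring
  rw [heq]
  exact (intervalIntegral.integral_hasDerivAt_right (hK.intervalIntegrable _ _)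
    (hK.stronglyMeasurableAtFilter _ _) hK.continuousAt).const_add _

lemma KI_cont (hK : Continuous K) (hKint : Integrable K) :
    Continuous (fun u => ∫ y in Iic u, K y) :=
  continuous_iff_continuousAt.2 fun w => (KI_hasDerivAt hK hKint w).continuousAt

lemma gA_cont (hK : Continuous K) (hKint : Integrable K) (a : ℝ) :
    Continuous (fun x => ∫ y in (x - a)..x, K y) := by
  have heq : (fun x => ∫ y in (x - a)..x, K y)
      = fun x => (∫ y in Iic x, K y) - ∫ y in Iic (x - a), K y := by
    funext x
    exact (intervalIntegral.integral_Iic_sub_Iic hKint.integrableOn hKint.integrableOn).symm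
  rw [heq]
  exact (KI_cont hK hKint).sub ((KI_cont hK hKint).comp (by continuity))

end Klemmas


lemma abs_add4 (a b c d : ℝ) : |a + b + c + d| ≤ |a| + |b| + |c| + |d| := by
  have h1 := abs_add_le (a + b + c) d
  have h2 := abs_add_le (a + b) c
  have h3 := abs_add_le a b
  linarith

lemma abs_add6 (a b c d e f : ℝ) :
    |a + b + c + d + e + f| ≤ |a| + |b| + |c| + |d| + |e| + |f| := by
  have h1 := abs_add_le (a + b + c + d + e) f
  have h2 := abs_add_le (a + b + c + d) e
  have h3 := abs_add4 a b c d
  linarith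

end S14x

noncomputable def Dx (γ x c ε : ℝ) : ℝ :=
  (ε / (c * (om1 γ ε - om2 γ ε))) *
    (-Real.exp (om1 γ ε * x / c) + Real.exp (om2 γ ε * x / c))

noncomputable def Upulse (K : ℝ → ℝ) (γ a c ε z : ℝ) : ℝ :=
  ∫ x in Iic z, Cx γ (x - z) c ε * ∫ y in (x - a)..x, K y

noncomputable def Qpulse (K : ℝ → ℝ) (γ a c ε z : ℝ) : ℝ :=
  ∫ x in Iic z, Dx γ (x - z) c ε * ∫ y in (x - a)..x, K y

noncomputable def Uf (K : ℝ → ℝ) (cf z : ℝ) : ℝ :=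
  (1 / cf) * ∫ x in Iic z, Real.exp ((x - z) / cf) * ∫ y in Iic x, K y

set_option maxHeartbeats 1000000 in
theorem statement14 (K : ℝ → ℝ)
    (hK : Continuous K)
    (hKdecay : ∃ α > (0:ℝ), ∃ ρ > (0:ℝ), ∀ x : ℝ, |K x| ≤ α * Real.exp (-ρ * |x|))
    (hKint : (∫ x : ℝ, K x) = 1)
    (γ cf z₀ : ℝ) (hγ : 0 < γ) (hcf : 0 < cf)
    (a c : ℝ → ℝ)
    (hapos : ∀ᶠ ε in 𝓝[>] (0:ℝ), 0 < a ε) (hcpos : ∀ᶠ ε in 𝓝[>] (0:ℝ), 0 < c ε)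
    (hccf : Tendsto c (𝓝[>] (0:ℝ)) (𝓝 cf)) (haT : Tendsto a (𝓝[>] (0:ℝ)) atTop) :
    (∀ δ > (0:ℝ), ∀ᶠ ε in 𝓝[>] (0:ℝ), ∀ z ≤ z₀,
        |Upulse K γ (a ε) (c ε) ε z - Uf K cf z| < δ) ∧
    ((∀ᶠ ε in 𝓝[>] (0:ℝ), ∀ z : ℝ, DifferentiableAt ℝ (Upulse K γ (a ε) (c ε) ε) z) ∧
      ∀ δ > (0:ℝ), ∀ᶠ ε in 𝓝[>] (0:ℝ), ∀ z ≤ z₀,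
        |deriv (Upulse K γ (a ε) (c ε) ε) z - deriv (Uf K cf) z| < δ) ∧
    (∀ δ > (0:ℝ), ∀ᶠ ε in 𝓝[>] (0:ℝ), ∀ z ≤ z₀,
        |Qpulse K γ (a ε) (c ε) ε z| < δ) ∧
    ((∀ᶠ ε in 𝓝[>] (0:ℝ), ∀ z : ℝ, DifferentiableAt ℝ (Qpulse K γ (a ε) (c ε) ε) z) ∧
      ∀ δ > (0:ℝ), ∀ᶠ ε in 𝓝[>] (0:ℝ), ∀ z ≤ z₀,
        |deriv (Qpulse K γ (a ε) (c ε) ε) z| < δ) := by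
  clear hKint
  obtain ⟨α, hα, ρ, hρ, hdec⟩ := hKdecay
  have hdisccont : Continuous (fun ε : ℝ => (1 - γ * ε) ^ 2 - 4 * ε) :=
    ((continuous_const.sub (continuous_const.mul continuous_id)).pow 2).sub
      (continuous_const.mul continuous_id)
  have hKint' : Integrable K := S14x.Kintegrable hK hα hρ hdec
  set l : Filter ℝ := 𝓝[>] (0:ℝ) with hl
  have hll : l ≤ 𝓝 (0:ℝ) := by rw [hl]; exact nhdsWithin_le_nhds
  set KI : ℝ → ℝ := fun x => ∫ y in Iic x, K y with hKIdef
  set Cm : ℝ := 2 * (α / ρ) with hCm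
  have hCm0 : 0 < Cm := by rw [hCm]; positivity
  set M₀ : ℝ := Cm * Real.exp (ρ * z₀) / ρ with hM₀
  set r0 : ℝ := 1 / cf with hr0
  have hr00 : 0 < r0 := by rw [hr0]; positivity
  -- K-level facts
  have hKIc : Continuous KI := S14x.KI_cont hK hKint'
  have hKIb : ∀ x, |KI x| ≤ Cm := by
    intro x
    refine (S14x.KI_le hK hα hρ hdec x).trans ?_
    have h := S14x.min_exp_le_one hρ x
    rw [hCm]
    nlinarith [div_pos hα hρ, Real.exp_pos (ρ * min x 0)]
  have hKIe : ∀ x, |KI x| ≤ Cm * Real.exp (ρ * x) := by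
    intro x
    refine (S14x.KI_le hK hα hρ hdec x).trans ?_
    have h := S14x.min_exp_le_exp hρ x
    rw [hCm]
    nlinarith [div_pos hα hρ]
  -- per-ε coefficient functions
  set A1 : ℝ → ℝ := fun ε => (1 - om2 γ ε) / (c ε * (om1 γ ε - om2 γ ε)) with hA1def
  set A2 : ℝ → ℝ := fun ε => -(1 - om1 γ ε) / (c ε * (om1 γ ε - om2 γ ε)) with hA2def
  set B : ℝ → ℝ := fun ε => ε / (c ε * (om1 γ ε - om2 γ ε)) with hBdef
  set r1 : ℝ → ℝ := fun ε => om1 γ ε / c ε with hr1def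
  set r2 : ℝ → ℝ := fun ε => om2 γ ε / c ε with hr2def
  set E : ℝ → ℝ := fun ε => Cm * Real.exp (-(ρ * a ε)) with hEdef
  -- limits
  have hom1 : Tendsto (fun ε => om1 γ ε) l (𝓝 1) := by
    have hco1 : Continuous (fun ε : ℝ => om1 γ ε) := by
      unfold om1
      exact ((continuous_const.add (continuous_const.mul continuous_id)).add
        (Real.continuous_sqrt.comp hdisccont)).div_const 2
    have h := (hco1.tendsto 0).mono_left hll
    have h0 : om1 γ 0 = 1 := by unfold om1; norm_num
    rwa [h0] at h
  have hom2 : Tendsto (fun ε => om2 γ ε) l (𝓝 0) := by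
    have hco1 : Continuous (fun ε : ℝ => om2 γ ε) := by
      unfold om2
      exact ((continuous_const.add (continuous_const.mul continuous_id)).sub
        (Real.continuous_sqrt.comp hdisccont)).div_const 2
    have h := (hco1.tendsto 0).mono_left hll
    have h0 : om2 γ 0 = 0 := by unfold om2; norm_num
    rwa [h0] at h
  have hid0 : Tendsto (fun ε : ℝ => ε) l (𝓝 0) := (tendsto_id : Tendsto (fun ε : ℝ => ε) l l).mono_right hll
  have hcne : (cf : ℝ) ≠ 0 := ne_of_gt hcf
  have hden : Tendsto (fun ε => c ε * (om1 γ ε - om2 γ ε)) l (𝓝 cf) := by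
    have h := hccf.mul (hom1.sub hom2)
    simpa using h
  have hone : Tendsto (fun _ : ℝ => (1:ℝ)) l (𝓝 1) := tendsto_const_nhds
  have hA1t : Tendsto A1 l (𝓝 (1 / cf)) := by
    have h := (hone.sub hom2).div hden hcne
    simpa [hA1def, Pi.div_def] using h
  have hA2t : Tendsto A2 l (𝓝 0) := by
    have h := (hone.sub hom1).neg.div hden hcne
    simpa [hA2def, Pi.div_def] using h
  have hBt : Tendsto B l (𝓝 0) := by
    have h := hid0.div hden hcne
    simpa [hBdef, Pi.div_def] using h
  have hr1t : Tendsto (fun ε => r1 ε) l (𝓝 r0) := by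
    have h := hom1.div hccf hcne
    rw [hr0]
    simpa [hr1def, Pi.div_def] using h
  have hr2t : Tendsto (fun ε => r2 ε) l (𝓝 0) := by
    have h := hom2.div hccf hcne
    simpa [hr2def, Pi.div_def] using h
  have hinvr1 : Tendsto (fun ε => 1 / r1 ε) l (𝓝 cf) := by
    have h := hr1t.inv₀ (ne_of_gt hr00)
    have h2 : r0⁻¹ = cf := by rw [hr0]; field_simp
    rw [h2] at h
    simpa [one_div] using h
  have hexp0 : Tendsto (fun ε => Real.exp (-(ρ * a ε))) l (𝓝 0) := by
    apply Real.tendsto_exp_atBot.comp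
    exact tendsto_neg_atTop_atBot.comp (haT.const_mul_atTop hρ)
  have hEt : Tendsto E l (𝓝 0) := by
    have h := hexp0.const_mul Cm
    simpa [hEdef] using h
  -- Phi functions
  set Φ1 : ℝ → ℝ := fun ε => |A1 ε - 1 / cf| * M₀ + 1 / cf * (Cm * |1 / r1 ε - cf|)
      + 1 / cf * (E ε * Real.exp (ρ * z₀) / ρ) + |A2 ε| * M₀ with hΦ1
  set Φ2 : ℝ → ℝ := fun ε => |A1 ε + A2 ε - 1 / cf| * Cm + 1 / cf * (E ε * Real.exp (ρ * z₀))
      + |A1 ε * r1 ε - 1 / cf * r0| * M₀ + 1 / cf * r0 * (Cm * |1 / r1 ε - cf|)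
      + 1 / cf * r0 * (E ε * Real.exp (ρ * z₀) / ρ) + |A2 ε * r2 ε| * M₀ with hΦ2
  set Φ3 : ℝ → ℝ := fun ε => |B ε| * (2 * M₀) with hΦ3
  set Φ4 : ℝ → ℝ := fun ε => |B ε| * ((r1 ε + r2 ε) * M₀) with hΦ4
  have hΦ1t : Tendsto Φ1 l (𝓝 0) := by
    have t1 := (hA1t.sub_const (1 / cf)).abs.mul_const M₀
    have t2 := (((hinvr1.sub_const cf).abs.const_mul Cm).const_mul (1 / cf))
    have t3 := (((hEt.mul_const (Real.exp (ρ * z₀))).div_const ρ).const_mul (1 / cf))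
    have t4 := hA2t.abs.mul_const M₀
    have h := ((t1.add t2).add t3).add t4
    rw [hΦ1]
    simpa using h
  have hΦ2t : Tendsto Φ2 l (𝓝 0) := by
    have t1 := ((hA1t.add hA2t).sub_const (1 / cf)).abs.mul_const Cm
    have t2 := ((hEt.mul_const (Real.exp (ρ * z₀))).const_mul (1 / cf))
    have t3 := ((hA1t.mul hr1t).sub_const (1 / cf * r0)).abs.mul_const M₀
    have t4 := (((hinvr1.sub_const cf).abs.const_mul Cm).const_mul (1 / cf * r0))
    have t5 := (((hEt.mul_const (Real.exp (ρ * z₀))).div_const ρ).const_mul (1 / cf * r0))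
    have t6 := (hA2t.mul hr2t).abs.mul_const M₀
    have h := ((((t1.add t2).add t3).add t4).add t5).add t6
    rw [hΦ2]
    simpa using h
  have hΦ3t : Tendsto Φ3 l (𝓝 0) := by
    have h := hBt.abs.mul_const (2 * M₀)
    rw [hΦ3]
    simpa using h
  have hΦ4t : Tendsto Φ4 l (𝓝 0) := by
    have h := hBt.abs.mul ((hr1t.add hr2t).mul_const M₀)
    rw [hΦ4]
    simpa using h
  -- Uf facts
  have hUfdec : ∀ z, Uf K cf z = 1 / cf * S14x.Faux r0 KI z := by
    intro z
    unfold Uf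
    congr 1
    refine setIntegral_congr_fun measurableSet_Iic fun x _ => ?_
    rw [show (x - z) / cf = r0 * (x - z) by rw [hr0]; ring]
  have hUfderiv : ∀ z, HasDerivAt (Uf K cf) (1 / cf * (KI z - r0 * S14x.Faux r0 KI z)) z := by
    intro z
    have hfun : Uf K cf = fun z => 1 / cf * S14x.Faux r0 KI z := funext hUfdec
    rw [hfun]
    exact (S14x.Faux_hasDerivAt hr00 hKIc hKIb z).const_mul _
  -- master estimate
  have master : ∀ᶠ ε in l,
      (∀ z ≤ z₀, |Upulse K γ (a ε) (c ε) ε z - Uf K cf z| ≤ Φ1 ε) ∧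
      (∀ z : ℝ, DifferentiableAt ℝ (Upulse K γ (a ε) (c ε) ε) z) ∧
      (∀ z ≤ z₀, |deriv (Upulse K γ (a ε) (c ε) ε) z - deriv (Uf K cf) z| ≤ Φ2 ε) ∧
      (∀ z ≤ z₀, |Qpulse K γ (a ε) (c ε) ε z| ≤ Φ3 ε) ∧
      (∀ z : ℝ, DifferentiableAt ℝ (Qpulse K γ (a ε) (c ε) ε) z) ∧
      (∀ z ≤ z₀, |deriv (Qpulse K γ (a ε) (c ε) ε) z| ≤ Φ4 ε) := by
    have hev1 : ∀ᶠ ε in l, (0:ℝ) < ε := by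
      filter_upwards [self_mem_nhdsWithin] with ε hε using hε
    have hev2 : ∀ᶠ ε in l, 0 < (1 - γ * ε) ^ 2 - 4 * ε := by
      have hdisc : Tendsto (fun ε : ℝ => (1 - γ * ε) ^ 2 - 4 * ε) l (𝓝 1) := by
        have h := (hdisccont.tendsto 0).mono_left hll
        norm_num at h
        exact h
      exact hdisc.eventually (eventually_gt_nhds one_pos)
    filter_upwards [hev1, hapos, hcpos, hev2] with ε hε haε hcε hd
    have hω2pos : 0 < om2 γ ε := by
      have h1γ : 0 < 1 + γ * ε := by nlinarith [mul_pos hγ hε]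
      have hsqlt : Real.sqrt ((1 - γ * ε) ^ 2 - 4 * ε) < 1 + γ * ε := by
        rw [show 1 + γ * ε = Real.sqrt ((1 + γ * ε) ^ 2) from (Real.sqrt_sq h1γ.le).symm]
        apply Real.sqrt_lt_sqrt hd.le
        nlinarith [mul_pos hγ hε]
      unfold om2
      linarith
    have hsqpos : 0 < Real.sqrt ((1 - γ * ε) ^ 2 - 4 * ε) := Real.sqrt_pos.2 hd
    have hωlt : om2 γ ε < om1 γ ε := by unfold om1 om2; linarith
    have hω1pos : 0 < om1 γ ε := lt_trans hω2pos hωlt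
    have hr1p : 0 < r1 ε := by rw [hr1def]; exact div_pos hω1pos hcε
    have hr2p : 0 < r2 ε := by rw [hr2def]; exact div_pos hω2pos hcε
    set g : ℝ → ℝ := fun x => ∫ y in (x - a ε)..x, K y with hgdef
    have hgc : Continuous g := S14x.gA_cont hK hKint' (a ε)
    have hgb : ∀ x, |g x| ≤ Cm := by
      intro x
      refine (S14x.gA_le hK hα hρ hdec haε x).trans ?_
      have h := S14x.min_exp_le_one hρ x
      rw [hCm]
      nlinarith [div_pos hα hρ, Real.exp_pos (ρ * min x 0)]
    have hge : ∀ x, |g x| ≤ Cm * Real.exp (ρ * x) := by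
      intro x
      refine (S14x.gA_le hK hα hρ hdec haε x).trans ?_
      have h := S14x.min_exp_le_exp hρ x
      rw [hCm]
      nlinarith [div_pos hα hρ]
    have hE0 : 0 ≤ E ε := by
      rw [hEdef]
      exact mul_nonneg hCm0.le (Real.exp_pos _).le
    have hgKI : ∀ x, |g x - KI x| ≤ E ε * Real.exp (ρ * x) := by
      intro x
      have h := S14x.gA_sub_KI hK hα hρ hdec haε x
      calc |g x - KI x| ≤ 2 * (α / ρ) * Real.exp (-(ρ * a ε)) * Real.exp (ρ * x) := h
        _ = E ε * Real.exp (ρ * x) := by rw [hEdef, hCm]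
    -- decompositions
    have hUdec : ∀ z, Upulse K γ (a ε) (c ε) ε z
        = A1 ε * S14x.Faux (r1 ε) g z + A2 ε * S14x.Faux (r2 ε) g z := by
      intro z
      have hpt : ∀ x, Cx γ (x - z) (c ε) ε * g x
          = A1 ε * (Real.exp (r1 ε * (x - z)) * g x)
            + A2 ε * (Real.exp (r2 ε * (x - z)) * g x) := by
        intro x
        simp only [Cx, hA1def, hA2def, hr1def, hr2def]
        rw [show om1 γ ε * (x - z) / c ε = om1 γ ε / c ε * (x - z) by ring,
          show om2 γ ε * (x - z) / c ε = om2 γ ε / c ε * (x - z) by ring]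
        ring
      show (∫ x in Iic z, Cx γ (x - z) (c ε) ε * ∫ y in (x - a ε)..x, K y) = _
      calc (∫ x in Iic z, Cx γ (x - z) (c ε) ε * ∫ y in (x - a ε)..x, K y)
          = ∫ x in Iic z, (A1 ε * (Real.exp (r1 ε * (x - z)) * g x)
            + A2 ε * (Real.exp (r2 ε * (x - z)) * g x)) := by
            refine setIntegral_congr_fun measurableSet_Iic fun x _ => ?_
            exact hpt x
        _ = A1 ε * S14x.Faux (r1 ε) g z + A2 ε * S14x.Faux (r2 ε) g z := by
            rw [integral_add ((S14x.Faux_int hr1p hgc hgb z).const_mul _)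
              ((S14x.Faux_int hr2p hgc hgb z).const_mul _), integral_const_mul, integral_const_mul]
            rfl
    have hQdec : ∀ z, Qpulse K γ (a ε) (c ε) ε z
        = B ε * (S14x.Faux (r2 ε) g z - S14x.Faux (r1 ε) g z) := by
      intro z
      have hpt : ∀ x, Dx γ (x - z) (c ε) ε * g x
          = B ε * (Real.exp (r2 ε * (x - z)) * g x)
            - B ε * (Real.exp (r1 ε * (x - z)) * g x) := by
        intro x
        simp only [Dx, hBdef, hr1def, hr2def]
        rw [show om1 γ ε * (x - z) / c ε = om1 γ ε / c ε * (x - z) by ring,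
          show om2 γ ε * (x - z) / c ε = om2 γ ε / c ε * (x - z) by ring]
        ring
      show (∫ x in Iic z, Dx γ (x - z) (c ε) ε * ∫ y in (x - a ε)..x, K y) = _
      calc (∫ x in Iic z, Dx γ (x - z) (c ε) ε * ∫ y in (x - a ε)..x, K y)
          = ∫ x in Iic z, (B ε * (Real.exp (r2 ε * (x - z)) * g x)
            - B ε * (Real.exp (r1 ε * (x - z)) * g x)) := by
            refine setIntegral_congr_fun measurableSet_Iic fun x _ => ?_
            exact hpt x
        _ = B ε * S14x.Faux (r2 ε) g z - B ε * S14x.Faux (r1 ε) g z := by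
            rw [integral_sub ((S14x.Faux_int hr2p hgc hgb z).const_mul _)
              ((S14x.Faux_int hr1p hgc hgb z).const_mul _), integral_const_mul, integral_const_mul]
            rfl
        _ = B ε * (S14x.Faux (r2 ε) g z - S14x.Faux (r1 ε) g z) := by ring
    -- derivatives
    have hUderiv : ∀ z, HasDerivAt (Upulse K γ (a ε) (c ε) ε)
        (A1 ε * (g z - r1 ε * S14x.Faux (r1 ε) g z)
          + A2 ε * (g z - r2 ε * S14x.Faux (r2 ε) g z)) z := by
      intro z
      have hfun : Upulse K γ (a ε) (c ε) ε
          = fun z => A1 ε * S14x.Faux (r1 ε) g z + A2 ε * S14x.Faux (r2 ε) g z := funext hUdec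
      rw [hfun]
      exact ((S14x.Faux_hasDerivAt hr1p hgc hgb z).const_mul _).add
        ((S14x.Faux_hasDerivAt hr2p hgc hgb z).const_mul _)
    have hQderiv : ∀ z, HasDerivAt (Qpulse K γ (a ε) (c ε) ε)
        (B ε * ((g z - r2 ε * S14x.Faux (r2 ε) g z)
          - (g z - r1 ε * S14x.Faux (r1 ε) g z))) z := by
      intro z
      have hfun : Qpulse K γ (a ε) (c ε) ε
          = fun z => B ε * (S14x.Faux (r2 ε) g z - S14x.Faux (r1 ε) g z) := funext hQdec
      rw [hfun]
      exact (((S14x.Faux_hasDerivAt hr2p hgc hgb z).sub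
        ((S14x.Faux_hasDerivAt hr1p hgc hgb z))).const_mul _)
    -- uniform bounds for z ≤ z₀
    have hFb1 : ∀ z, z ≤ z₀ → |S14x.Faux (r1 ε) g z| ≤ M₀ := by
      intro z hz
      have h := S14x.Faux_le' hr1p hρ hge hz
      rw [hM₀]
      exact h
    have hFb2 : ∀ z, z ≤ z₀ → |S14x.Faux (r2 ε) g z| ≤ M₀ := by
      intro z hz
      have h := S14x.Faux_le' hr2p hρ hge hz
      rw [hM₀]
      exact h
    have e2 : ∀ z, |S14x.Faux (r1 ε) g z - S14x.Faux r0 g z| ≤ Cm * |1 / r1 ε - cf| := by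
      intro z
      have h := S14x.Faux_rdiff hr1p hr00 hgc hgb z
      have h2 : (1:ℝ) / r0 = cf := by rw [hr0, one_div_one_div]
      rwa [h2] at h
    have e3 : ∀ z, z ≤ z₀ → |S14x.Faux r0 g z - S14x.Faux r0 KI z|
        ≤ E ε * Real.exp (ρ * z₀) / ρ := by
      intro z hz
      rw [S14x.Faux_gsub hr00 hgc hKIc hgb hKIb z]
      exact S14x.Faux_le' hr00 hρ hgKI hz
    refine ⟨?_, ?_, ?_, ?_, ?_, ?_⟩
    · -- part 1
      intro z hz
      have hX : Upulse K γ (a ε) (c ε) ε z - Uf K cf z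
          = (A1 ε - 1 / cf) * S14x.Faux (r1 ε) g z
            + 1 / cf * (S14x.Faux (r1 ε) g z - S14x.Faux r0 g z)
            + 1 / cf * (S14x.Faux r0 g z - S14x.Faux r0 KI z)
            + A2 ε * S14x.Faux (r2 ε) g z := by
        rw [hUdec z, hUfdec z]; ring
      rw [hX]
      have t1 : |(A1 ε - 1 / cf) * S14x.Faux (r1 ε) g z| ≤ |A1 ε - 1 / cf| * M₀ := by
        rw [abs_mul]; exact mul_le_mul_of_nonneg_left (hFb1 z hz) (abs_nonneg _)
      have t2 : |1 / cf * (S14x.Faux (r1 ε) g z - S14x.Faux r0 g z)|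
          ≤ 1 / cf * (Cm * |1 / r1 ε - cf|) := by
        rw [abs_mul, abs_of_pos (by positivity : (0:ℝ) < 1 / cf)]
        exact mul_le_mul_of_nonneg_left (e2 z) (by positivity)
      have t3 : |1 / cf * (S14x.Faux r0 g z - S14x.Faux r0 KI z)|
          ≤ 1 / cf * (E ε * Real.exp (ρ * z₀) / ρ) := by
        rw [abs_mul, abs_of_pos (by positivity : (0:ℝ) < 1 / cf)]
        exact mul_le_mul_of_nonneg_left (e3 z hz) (by positivity)
      have t4 : |A2 ε * S14x.Faux (r2 ε) g z| ≤ |A2 ε| * M₀ := by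
        rw [abs_mul]; exact mul_le_mul_of_nonneg_left (hFb2 z hz) (abs_nonneg _)
      refine le_trans (S14x.abs_add4 _ _ _ _) ?_
      rw [hΦ1]
      simp only
      linarith
    · -- part 2: differentiability of U
      exact fun z => (hUderiv z).differentiableAt
    · -- part 3: deriv difference
      intro z hz
      rw [(hUderiv z).deriv, (hUfderiv z).deriv]
      have hX : A1 ε * (g z - r1 ε * S14x.Faux (r1 ε) g z)
            + A2 ε * (g z - r2 ε * S14x.Faux (r2 ε) g z)
            - 1 / cf * (KI z - r0 * S14x.Faux r0 KI z)
          = (A1 ε + A2 ε - 1 / cf) * g z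
            + 1 / cf * (g z - KI z)
            + (-(A1 ε * r1 ε - 1 / cf * r0)) * S14x.Faux (r1 ε) g z
            + (-(1 / cf * r0)) * (S14x.Faux (r1 ε) g z - S14x.Faux r0 g z)
            + (-(1 / cf * r0)) * (S14x.Faux r0 g z - S14x.Faux r0 KI z)
            + (-(A2 ε * r2 ε)) * S14x.Faux (r2 ε) g z := by ring
      rw [hX]
      have u1 : |(A1 ε + A2 ε - 1 / cf) * g z| ≤ |A1 ε + A2 ε - 1 / cf| * Cm := by
        rw [abs_mul]; exact mul_le_mul_of_nonneg_left (hgb z) (abs_nonneg _)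
      have u2 : |1 / cf * (g z - KI z)| ≤ 1 / cf * (E ε * Real.exp (ρ * z₀)) := by
        rw [abs_mul, abs_of_pos (by positivity : (0:ℝ) < 1 / cf)]
        refine mul_le_mul_of_nonneg_left ?_ (by positivity)
        refine (hgKI z).trans ?_
        exact mul_le_mul_of_nonneg_left
          (Real.exp_le_exp.2 (mul_le_mul_of_nonneg_left hz hρ.le)) hE0
      have u3 : |(-(A1 ε * r1 ε - 1 / cf * r0)) * S14x.Faux (r1 ε) g z|
          ≤ |A1 ε * r1 ε - 1 / cf * r0| * M₀ := by
        rw [abs_mul, abs_neg]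
        exact mul_le_mul_of_nonneg_left (hFb1 z hz) (abs_nonneg _)
      have u4 : |(-(1 / cf * r0)) * (S14x.Faux (r1 ε) g z - S14x.Faux r0 g z)|
          ≤ 1 / cf * r0 * (Cm * |1 / r1 ε - cf|) := by
        rw [abs_mul, abs_neg, abs_of_pos (by positivity : (0:ℝ) < 1 / cf * r0)]
        exact mul_le_mul_of_nonneg_left (e2 z) (by positivity)
      have u5 : |(-(1 / cf * r0)) * (S14x.Faux r0 g z - S14x.Faux r0 KI z)|
          ≤ 1 / cf * r0 * (E ε * Real.exp (ρ * z₀) / ρ) := by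
        rw [abs_mul, abs_neg, abs_of_pos (by positivity : (0:ℝ) < 1 / cf * r0)]
        exact mul_le_mul_of_nonneg_left (e3 z hz) (by positivity)
      have u6 : |(-(A2 ε * r2 ε)) * S14x.Faux (r2 ε) g z| ≤ |A2 ε * r2 ε| * M₀ := by
        rw [abs_mul, abs_neg]
        exact mul_le_mul_of_nonneg_left (hFb2 z hz) (abs_nonneg _)
      refine le_trans (S14x.abs_add6 _ _ _ _ _ _) ?_
      rw [hΦ2]
      simp only
      linarith
    · -- part 4: Q bound
      intro z hz
      rw [hQdec z, abs_mul]
      rw [hΦ3]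
      simp only
      refine mul_le_mul_of_nonneg_left ?_ (abs_nonneg _)
      have h : |S14x.Faux (r2 ε) g z - S14x.Faux (r1 ε) g z|
          ≤ |S14x.Faux (r2 ε) g z| + |S14x.Faux (r1 ε) g z| := by
        rw [sub_eq_add_neg]
        refine (abs_add_le _ _).trans ?_
        rw [abs_neg]
      have h1 := hFb1 z hz
      have h2 := hFb2 z hz
      linarith
    · -- part 5: differentiability of Q
      exact fun z => (hQderiv z).differentiableAt
    · -- part 6: deriv Q bound
      intro z hz
      rw [(hQderiv z).deriv, abs_mul]
      rw [hΦ4]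
      simp only
      refine mul_le_mul_of_nonneg_left ?_ (abs_nonneg _)
      rw [show (g z - r2 ε * S14x.Faux (r2 ε) g z) - (g z - r1 ε * S14x.Faux (r1 ε) g z)
        = r1 ε * S14x.Faux (r1 ε) g z - r2 ε * S14x.Faux (r2 ε) g z by ring]
      have h : |r1 ε * S14x.Faux (r1 ε) g z - r2 ε * S14x.Faux (r2 ε) g z|
          ≤ r1 ε * M₀ + r2 ε * M₀ := by
        have ha : |r1 ε * S14x.Faux (r1 ε) g z| ≤ r1 ε * M₀ := by
          rw [abs_mul, abs_of_pos hr1p]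
          exact mul_le_mul_of_nonneg_left (hFb1 z hz) hr1p.le
        have hb : |r2 ε * S14x.Faux (r2 ε) g z| ≤ r2 ε * M₀ := by
          rw [abs_mul, abs_of_pos hr2p]
          exact mul_le_mul_of_nonneg_left (hFb2 z hz) hr2p.le
        have hc : |r1 ε * S14x.Faux (r1 ε) g z - r2 ε * S14x.Faux (r2 ε) g z|
            ≤ |r1 ε * S14x.Faux (r1 ε) g z| + |r2 ε * S14x.Faux (r2 ε) g z| := by
          rw [sub_eq_add_neg]
          refine (abs_add_le _ _).trans ?_
          rw [abs_neg]
        linarith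
      nlinarith [h]
  -- conclude
  refine ⟨?_, ⟨?_, ?_⟩, ?_, ⟨?_, ?_⟩⟩
  · intro δ hδ
    filter_upwards [master, hΦ1t.eventually_lt_const hδ] with ε hm hlt z hz
    exact lt_of_le_of_lt (hm.1 z hz) hlt
  · filter_upwards [master] with ε hm
    exact hm.2.1
  · intro δ hδ
    filter_upwards [master, hΦ2t.eventually_lt_const hδ] with ε hm hlt z hz
    exact lt_of_le_of_lt (hm.2.2.1 z hz) hlt
  · intro δ hδ
    filter_upwards [master, hΦ3t.eventually_lt_const hδ] with ε hm hlt z hz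
    exact lt_of_le_of_lt (hm.2.2.2.1 z hz) hlt
  · filter_upwards [master] with ε hm
    exact hm.2.2.2.2.1
  · intro δ hδ
    filter_upwards [master, hΦ4t.eventually_lt_const hδ] with ε hm hlt z hz
    exact lt_of_le_of_lt (hm.2.2.2.2.2 z hz) hlt
end

section
/- Assume the parameter hypotheses, let c_f > 0, and let z₀ > 0 be fixed. Let ε ↦ c_ε > 0 and ε ↦ τ_ε > 0 be functions of ε > 0 with c_ε → c_f and τ_ε → τ₀ as ε → 0⁺, set a_ε := τ_ε/ε, and define Q_ε using parameters a = a_ε and c = c_ε. Then Q_ε(a_ε − z₀) → 1 − 2θ as ε → 0⁺. -/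
open MeasureTheory Real Filter Set Topology


lemma shiftIic (f : ℝ → ℝ) (z : ℝ) : ∫ x in Iic z, f x = ∫ u in Iic 0, f (u + z) := by
  rw [← integral_indicator measurableSet_Iic, ← integral_indicator measurableSet_Iic,
    ← integral_add_right_eq_self ((Iic z).indicator f) z]
  congr 1; ext u
  have : u + z ≤ z ↔ u ≤ 0 := by constructor <;> intro <;> linarith
  by_cases h : u ≤ 0 <;> simp [Set.indicator, mem_Iic, this, h]

lemma intExpIic {k : ℝ} (hk : 0 < k) : IntegrableOn (fun u => Real.exp (k * u)) (Iic 0) := by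
  apply (integrable_indicator_iff measurableSet_Iic).mp
  have h1 : Integrable ((Iic (0:ℝ)).indicator Real.exp) :=
    (integrable_indicator_iff measurableSet_Iic).mpr (integrableOn_exp_Iic 0)
  have h2 := (integrable_comp_mul_left_iff ((Iic (0:ℝ)).indicator Real.exp) hk.ne').mpr h1
  apply h2.congr
  filter_upwards with u
  have hiff : k * u ≤ 0 ↔ u ≤ 0 := by
    constructor
    · intro h; nlinarith
    · intro h; exact mul_nonpos_iff.mpr (Or.inl ⟨hk.le, h⟩)
  by_cases h : u ≤ 0 <;> simp [Set.indicator, mem_Iic, hiff, h]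

lemma valExpIic {k : ℝ} (hk : 0 < k) : ∫ u in Iic (0:ℝ), Real.exp (k * u) = 1 / k := by
  have h1 := integral_comp_neg_Iic (0:ℝ) (fun x => Real.exp (-(k * x)))
  simp only [mul_neg, neg_neg, neg_zero] at h1
  rw [h1]
  have h2 := integral_comp_mul_left_Ioi (fun y => Real.exp (-y)) 0 hk
  simp only [mul_zero] at h2
  rw [h2, integral_exp_neg_Ioi_zero]; simp [one_div]

lemma intExpMul {k : ℝ} (hk : 0 < k) {h : ℝ → ℝ} (hc : Continuous h) {M : ℝ}
    (hM : ∀ x, |h x| ≤ M) : IntegrableOn (fun u => Real.exp (k * u) * h u) (Iic 0) := by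
  have h1 : IntegrableOn (fun u => h u * Real.exp (k * u)) (Iic 0) :=
    (intExpIic hk).bdd_mul (c := M) hc.aestronglyMeasurable.restrict
      (ae_of_all _ fun x => by simpa [Real.norm_eq_abs] using hM x)
  exact h1.congr_fun (fun x _ => mul_comm _ _) measurableSet_Iic

lemma KInt {K : ℝ → ℝ} (hK : Continuous K) {α ρ : ℝ} (hρ : 0 < ρ)
    (hb : ∀ x, |K x| ≤ α * Real.exp (-ρ * |x|)) : Integrable K := by
  have h1 : IntegrableOn (fun x => Real.exp (-ρ * |x|)) (Iic 0) := by
    apply (intExpIic hρ).congr_fun _ measurableSet_Iic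
    intro x hx
    simp only [mem_Iic] at hx
    show Real.exp (ρ * x) = Real.exp (-ρ * |x|)
    rw [abs_of_nonpos hx]; ring_nf
  have h2 : IntegrableOn (fun x => Real.exp (-ρ * |x|)) (Ioi 0) := by
    apply (exp_neg_integrableOn_Ioi 0 hρ).congr_fun _ measurableSet_Ioi
    intro x hx
    simp only [mem_Ioi] at hx
    show Real.exp (-ρ * x) = Real.exp (-ρ * |x|)
    rw [abs_of_pos hx]
  have h3 : Integrable (fun x => α * Real.exp (-ρ * |x|)) := by
    have := (h1.union h2)
    rw [Iic_union_Ioi] at this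
    exact (integrableOn_univ.mp this).const_mul α
  exact h3.mono' hK.aestronglyMeasurable (ae_of_all _ fun x => by
    simpa [Real.norm_eq_abs] using hb x)

lemma Ftop {K : ℝ → ℝ} (hK : Integrable K) :
    Tendsto (fun x => ∫ t in Iic x, K t) atTop (𝓝 (∫ t, K t)) := by
  have := tendsto_integral_filter_of_dominated_convergence (μ := volume)
    (l := atTop) (F := fun x => (Iic x).indicator K) (f := K) (fun t => ‖K t‖)
    (Eventually.of_forall fun x => hK.aestronglyMeasurable.indicator measurableSet_Iic)
    (Eventually.of_forall fun x => ae_of_all _ fun t => norm_indicator_le_norm_self K t)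
    hK.norm
    (ae_of_all _ fun t => by
      apply tendsto_const_nhds.congr'
      filter_upwards [Ici_mem_atTop t] with x hx
      simp [Set.indicator, mem_Iic, (mem_Ici.mp hx : t ≤ x)])
  simpa only [integral_indicator measurableSet_Iic] using this

lemma Fbot {K : ℝ → ℝ} (hK : Integrable K) :
    Tendsto (fun x => ∫ t in Iic x, K t) atBot (𝓝 0) := by
  have := tendsto_integral_filter_of_dominated_convergence (μ := volume)
    (l := atBot) (F := fun x => (Iic x).indicator K) (f := fun _ => (0:ℝ)) (fun t => ‖K t‖)
    (Eventually.of_forall fun x => hK.aestronglyMeasurable.indicator measurableSet_Iic)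
    (Eventually.of_forall fun x => ae_of_all _ fun t => norm_indicator_le_norm_self K t)
    hK.norm
    (ae_of_all _ fun t => by
      apply tendsto_const_nhds.congr'
      filter_upwards [Iio_mem_atBot t] with x hx
      exact (Set.indicator_of_notMem (by simpa [mem_Iic] using mem_Iio.mp hx) K).symm)
  simpa only [integral_indicator measurableSet_Iic, integral_const, smul_zero,
    MeasureTheory.integral_zero] using this

lemma Fcont {K : ℝ → ℝ} (hK : Integrable K) :
    Continuous (fun x => ∫ t in Iic x, K t) := by
  have h : (fun x => ∫ t in Iic x, K t)
      = fun x => (∫ t in (0:ℝ)..x, K t) + ∫ t in Iic (0:ℝ), K t := by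
    funext x
    rw [← intervalIntegral.integral_Iic_sub_Iic (hK.integrableOn) (hK.integrableOn)]
    ring
  rw [h]
  exact (intervalIntegral.continuous_primitive (fun a b => hK.intervalIntegrable) 0).add
    continuous_const

lemma scaleIic (h : ℝ → ℝ) {b : ℝ} (hb : 0 < b) :
    ∫ u in Iic (0:ℝ), h (b * u) = b⁻¹ * ∫ v in Iic (0:ℝ), h v := by
  have h1 := integral_comp_neg_Iic (0:ℝ) (fun y => h (-(b * y)))
  simp only [mul_neg, neg_neg, neg_zero] at h1
  rw [h1]
  have h2 := integral_comp_mul_left_Ioi (fun y => h (-y)) 0 hb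
  simp only [mul_zero] at h2
  rw [h2, integral_comp_neg_Ioi]
  simp [smul_eq_mul]

set_option maxHeartbeats 1600000 in
theorem statement15 (K : ℝ → ℝ)
    (hK : Continuous K)
    (hKdecay : ∃ α > (0:ℝ), ∃ ρ > (0:ℝ), ∀ x : ℝ, |K x| ≤ α * Real.exp (-ρ * |x|))
    (hKint : (∫ x : ℝ, K x) = 1)
    (θ γ cf z₀ : ℝ)
    (hθ0 : 0 < θ) (hθh : θ < 1 / 2) (hθK : θ < ∫ x in Iio (0:ℝ), K x)
    (hγ : 0 < γ) (hγθ : γ / (1 + γ) < θ)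
    (hcf : 0 < cf) (hz₀ : 0 < z₀)
    (c τ : ℝ → ℝ)
    (hcpos : ∀ᶠ ε in 𝓝[>] (0:ℝ), 0 < c ε) (hτpos : ∀ᶠ ε in 𝓝[>] (0:ℝ), 0 < τ ε)
    (hccf : Tendsto c (𝓝[>] (0:ℝ)) (𝓝 cf))
    (hττ₀ : Tendsto τ (𝓝[>] (0:ℝ))
      (𝓝 (-(cf / (1 + γ)) * Real.log (2 * θ * (1 + γ) - γ)))) :
    Tendsto (fun ε => Qpulse K γ (τ ε / ε) (c ε) ε (τ ε / ε - z₀))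
      (𝓝[>] (0:ℝ)) (𝓝 (1 - 2 * θ)) := by
  obtain ⟨α, hα, ρ, hρ, hKb⟩ := hKdecay
  have hKL1 : Integrable K := KInt hK hρ hKb
  set F : ℝ → ℝ := fun x => ∫ t in Iic x, K t with hFdef
  set M : ℝ := ∫ t, ‖K t‖ with hMdef
  have hM0 : 0 ≤ M := integral_nonneg fun t => norm_nonneg _
  have hFc : Continuous F := Fcont hKL1
  have hFtop : Tendsto F atTop (𝓝 1) := hKint ▸ Ftop hKL1
  have hFbot : Tendsto F atBot (𝓝 0) := Fbot hKL1
  have hgg : ∀ p q : ℝ, (∫ y in p..q, K y) = F q - F p := fun p q =>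
    (intervalIntegral.integral_Iic_sub_Iic hKL1.integrableOn hKL1.integrableOn).symm
  have hggb : ∀ p q : ℝ, |∫ y in p..q, K y| ≤ M := fun p q => by
    calc |∫ y in p..q, K y| = ‖∫ y in p..q, K y‖ := (Real.norm_eq_abs _).symm
      _ ≤ ∫ y in Set.uIoc p q, ‖K y‖ := intervalIntegral.norm_integral_le_integral_norm_uIoc
      _ ≤ M := setIntegral_le_integral hKL1.norm (ae_of_all _ fun t => norm_nonneg _)
  have hGcont : ∀ aa : ℝ, Continuous fun x : ℝ => ∫ y in (x - aa)..x, K y := by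
    intro aa
    have h : (fun x : ℝ => ∫ y in (x - aa)..x, K y) = fun x => F x - F (x - aa) :=
      funext fun x => by rw [hgg]
    rw [h]
    exact hFc.sub (hFc.comp (continuous_id.sub continuous_const))
  -- constants
  have hγ1 : (0:ℝ) < 1 + γ := by linarith
  have hγθ' : γ < θ * (1 + γ) := (div_lt_iff₀ hγ1).mp hγθ
  have hP0 : 0 < 2 * θ * (1 + γ) - γ := by nlinarith
  have hP1 : 2 * θ * (1 + γ) - γ < 1 := by nlinarith
  set vs : ℝ := Real.log (2 * θ * (1 + γ) - γ) with hvsdef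
  have hvs0 : vs < 0 := Real.log_neg hP0 hP1
  have hexpvs : Real.exp vs = 2 * θ * (1 + γ) - γ := Real.exp_log hP0
  set τ₀ : ℝ := -(cf / (1 + γ)) * vs with hτ₀def
  -- basic limits
  have hεlim : Tendsto (fun ε : ℝ => ε) (𝓝[>] (0:ℝ)) (𝓝 0) :=
    tendsto_id.mono_left nhdsWithin_le_nhds
  have hdisc : Tendsto (fun ε : ℝ => (1 - γ * ε) ^ 2 - 4 * ε) (𝓝[>] (0:ℝ)) (𝓝 1) := by
    have hco : Continuous fun ε : ℝ => (1 - γ * ε) ^ 2 - 4 * ε := by continuity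
    have := (hco.tendsto 0).mono_left (nhdsWithin_le_nhds (s := Set.Ioi (0:ℝ)))
    norm_num at this
    exact this
  have hslim : Tendsto (fun ε : ℝ => Real.sqrt ((1 - γ * ε) ^ 2 - 4 * ε)) (𝓝[>] (0:ℝ)) (𝓝 1) := by
    have := (Real.continuous_sqrt.tendsto 1).comp hdisc
    simpa [Function.comp_def] using this
  have honeγ : Tendsto (fun ε : ℝ => 1 + γ * ε) (𝓝[>] (0:ℝ)) (𝓝 (1 + γ * 0)) :=
    tendsto_const_nhds.add (hεlim.const_mul γ)
  have hom1 : Tendsto (fun ε => om1 γ ε) (𝓝[>] (0:ℝ)) (𝓝 1) := by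
    have h : Tendsto (fun ε : ℝ => (1 + γ * ε + Real.sqrt ((1 - γ * ε) ^ 2 - 4 * ε)) / 2)
        (𝓝[>] (0:ℝ)) (𝓝 ((1 + γ * 0 + 1) / 2)) := (honeγ.add hslim).div_const 2
    norm_num at h
    exact h.congr fun ε => by rw [om1]
  have hom2 : Tendsto (fun ε => om2 γ ε) (𝓝[>] (0:ℝ)) (𝓝 0) := by
    have h : Tendsto (fun ε : ℝ => (1 + γ * ε - Real.sqrt ((1 - γ * ε) ^ 2 - 4 * ε)) / 2)
        (𝓝[>] (0:ℝ)) (𝓝 ((1 + γ * 0 - 1) / 2)) := (honeγ.sub hslim).div_const 2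
    norm_num at h
    exact h.congr fun ε => by rw [om2]
  -- eventual goodness
  have hgood : ∀ᶠ ε in 𝓝[>] (0:ℝ), 0 < ε ∧ 0 < c ε ∧ 0 < τ ε ∧
      om2 γ ε < om1 γ ε ∧ 0 < om1 γ ε ∧ 0 < om2 γ ε ∧
      om1 γ ε * om2 γ ε = ε * (1 + γ) := by
    filter_upwards [self_mem_nhdsWithin, hcpos, hτpos,
      hdisc.eventually (eventually_gt_nhds (by norm_num : (0:ℝ) < 1))] with ε hε hc hτ hd
    have hε0 : 0 < ε := hε
    have hsq : Real.sqrt ((1 - γ * ε) ^ 2 - 4 * ε) ^ 2 = (1 - γ * ε) ^ 2 - 4 * ε :=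
      Real.sq_sqrt hd.le
    have hspos : 0 < Real.sqrt ((1 - γ * ε) ^ 2 - 4 * ε) := Real.sqrt_pos.mpr hd
    have h1γε : 0 < 1 + γ * ε := by nlinarith
    have hom1p : 0 < om1 γ ε := by rw [om1]; positivity
    have hprod : om1 γ ε * om2 γ ε = ε * (1 + γ) := by
      rw [om1, om2]
      linear_combination (-(1:ℝ)/4) * hsq
    have hom2p : 0 < om2 γ ε := by
      nlinarith [mul_pos hε0 hγ1]
    have h12 : om2 γ ε < om1 γ ε := by
      rw [om1, om2]; linarith
    exact ⟨hε0, hc, hτ, h12, hom1p, hom2p, hprod⟩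
  -- named ε-functions
  set AF : ℝ → ℝ := fun ε => ε / (c ε * (om1 γ ε - om2 γ ε)) with hAFdef
  set coefF : ℝ → ℝ := fun ε => ε / ((om1 γ ε - om2 γ ε) * om2 γ ε) with hcoefdef
  set IF : ℝ → ℝ := fun ε => ∫ v in Iic (0:ℝ), Real.exp v *
      ∫ y in (v * (c ε / om2 γ ε) + (τ ε / ε - z₀) - τ ε / ε)..(v * (c ε / om2 γ ε) + (τ ε / ε - z₀)), K y
    with hIFdef
  set JF : ℝ → ℝ := fun ε => ∫ u in Iic (0:ℝ), Real.exp (om1 γ ε / c ε * u) *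
      ∫ y in (u + (τ ε / ε - z₀) - τ ε / ε)..(u + (τ ε / ε - z₀)), K y
    with hJFdef
  -- key identity
  have key : ∀ᶠ ε in 𝓝[>] (0:ℝ), Qpulse K γ (τ ε / ε) (c ε) ε (τ ε / ε - z₀)
      = coefF ε * IF ε - AF ε * JF ε := by
    filter_upwards [hgood] with ε ⟨hε, hc, hτ, h12, h1p, h2p, hprod⟩
    have hsub : 0 < om1 γ ε - om2 γ ε := by linarith
    have hb : 0 < om2 γ ε / c ε := div_pos h2p hc
    have hr : 0 < om1 γ ε / c ε := div_pos h1p hc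
    have hGc : Continuous fun x : ℝ => ∫ y in (x - τ ε / ε)..x, K y := hGcont _
    have hGb : ∀ x : ℝ, |∫ y in (x - τ ε / ε)..x, K y| ≤ M := fun x => hggb _ _
    have hGcz : Continuous fun u : ℝ => ∫ y in (u + (τ ε / ε - z₀) - τ ε / ε)..(u + (τ ε / ε - z₀)), K y := by
      have := hGc.comp (continuous_id.add (continuous_const : Continuous fun _ : ℝ => τ ε / ε - z₀))
      exact this
    have e0 : Qpulse K γ (τ ε / ε) (c ε) ε (τ ε / ε - z₀)
        = ∫ u in Iic (0:ℝ), Dx γ u (c ε) ε *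
            ∫ y in (u + (τ ε / ε - z₀) - τ ε / ε)..(u + (τ ε / ε - z₀)), K y := by
      rw [Qpulse, shiftIic (fun x => Dx γ (x - (τ ε / ε - z₀)) (c ε) ε *
        ∫ y in (x - τ ε / ε)..x, K y) (τ ε / ε - z₀)]
      simp only [add_sub_cancel_right]
    have e1 : ∀ u : ℝ, Dx γ u (c ε) ε = AF ε *
        (Real.exp (om2 γ ε / c ε * u) - Real.exp (om1 γ ε / c ε * u)) := by
      intro u
      rw [Dx, show om1 γ ε * u / c ε = om1 γ ε / c ε * u from mul_div_right_comm _ _ _,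
        show om2 γ ε * u / c ε = om2 γ ε / c ε * u from mul_div_right_comm _ _ _, hAFdef]
      ring
    have int1 : IntegrableOn (fun u => Real.exp (om2 γ ε / c ε * u) *
        ∫ y in (u + (τ ε / ε - z₀) - τ ε / ε)..(u + (τ ε / ε - z₀)), K y) (Iic 0) :=
      intExpMul hb hGcz (fun x => hggb _ _)
    have int2 : IntegrableOn (fun u => Real.exp (om1 γ ε / c ε * u) *
        ∫ y in (u + (τ ε / ε - z₀) - τ ε / ε)..(u + (τ ε / ε - z₀)), K y) (Iic 0) :=
      intExpMul hr hGcz (fun x => hggb _ _)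
    have e2 : (∫ u in Iic (0:ℝ), Dx γ u (c ε) ε *
          ∫ y in (u + (τ ε / ε - z₀) - τ ε / ε)..(u + (τ ε / ε - z₀)), K y)
        = AF ε * (∫ u in Iic (0:ℝ), Real.exp (om2 γ ε / c ε * u) *
            ∫ y in (u + (τ ε / ε - z₀) - τ ε / ε)..(u + (τ ε / ε - z₀)), K y)
          - AF ε * JF ε := by
      rw [hJFdef]
      rw [show (∫ u in Iic (0:ℝ), Dx γ u (c ε) ε *
          ∫ y in (u + (τ ε / ε - z₀) - τ ε / ε)..(u + (τ ε / ε - z₀)), K y)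
        = ∫ u in Iic (0:ℝ),
            (AF ε * (Real.exp (om2 γ ε / c ε * u) *
              ∫ y in (u + (τ ε / ε - z₀) - τ ε / ε)..(u + (τ ε / ε - z₀)), K y)
            - AF ε * (Real.exp (om1 γ ε / c ε * u) *
              ∫ y in (u + (τ ε / ε - z₀) - τ ε / ε)..(u + (τ ε / ε - z₀)), K y))
        from setIntegral_congr_fun measurableSet_Iic fun u _ => by rw [e1 u]; ring]
      rw [integral_sub ((int1.const_mul _)) ((int2.const_mul _)),
        integral_const_mul, integral_const_mul]
    have e3 : (∫ u in Iic (0:ℝ), Real.exp (om2 γ ε / c ε * u) *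
          ∫ y in (u + (τ ε / ε - z₀) - τ ε / ε)..(u + (τ ε / ε - z₀)), K y)
        = (om2 γ ε / c ε)⁻¹ * IF ε := by
      have h1 : ∀ u : ℝ, (Real.exp (om2 γ ε / c ε * u) *
            ∫ y in (u + (τ ε / ε - z₀) - τ ε / ε)..(u + (τ ε / ε - z₀)), K y)
          = (fun w => Real.exp w *
              ∫ y in (w * (c ε / om2 γ ε) + (τ ε / ε - z₀) - τ ε / ε)..(w * (c ε / om2 γ ε) + (τ ε / ε - z₀)), K y)
            (om2 γ ε / c ε * u) := by
        intro u
        have harg : om2 γ ε / c ε * u * (c ε / om2 γ ε) = u := by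
          field_simp
        simp only [harg]
      rw [setIntegral_congr_fun measurableSet_Iic fun u _ => h1 u,
        scaleIic (fun w => Real.exp w *
          ∫ y in (w * (c ε / om2 γ ε) + (τ ε / ε - z₀) - τ ε / ε)..(w * (c ε / om2 γ ε) + (τ ε / ε - z₀)), K y) hb,
        hIFdef]
    rw [e0, e2, e3]
    congr 1
    have hAc : AF ε * (om2 γ ε / c ε)⁻¹ = coefF ε := by
      rw [hAFdef, hcoefdef]
      field_simp
    rw [← mul_assoc, hAc]
  -- T2 tends to 0
  have hT2 : Tendsto (fun ε => AF ε * JF ε) (𝓝[>] (0:ℝ)) (𝓝 0) := by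
    apply squeeze_zero_norm'
      (a := fun ε => ε * M / ((om1 γ ε - om2 γ ε) * om1 γ ε))
    · filter_upwards [hgood] with ε ⟨hε, hc, hτ, h12, h1p, h2p, hprod⟩
      have hsub : 0 < om1 γ ε - om2 γ ε := by linarith
      have hr : 0 < om1 γ ε / c ε := div_pos h1p hc
      have hGcz : Continuous fun u : ℝ =>
          ∫ y in (u + (τ ε / ε - z₀) - τ ε / ε)..(u + (τ ε / ε - z₀)), K y :=
        (hGcont (τ ε / ε)).comp (continuous_id.add continuous_const)
      have hJ : ‖JF ε‖ ≤ 1 / (om1 γ ε / c ε) * M := by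
        rw [hJFdef]
        have hle := norm_integral_le_of_norm_le
          (f := fun u => Real.exp (om1 γ ε / c ε * u) *
            ∫ y in (u + (τ ε / ε - z₀) - τ ε / ε)..(u + (τ ε / ε - z₀)), K y)
          (g := fun u => Real.exp (om1 γ ε / c ε * u) * M)
          ((intExpIic hr).mul_const M)
          (ae_of_all _ fun u => by
            rw [Real.norm_eq_abs, abs_mul, Real.abs_exp]
            exact mul_le_mul_of_nonneg_left (hggb _ _) (Real.exp_pos _).le)
        calc ‖∫ u in Iic (0:ℝ), Real.exp (om1 γ ε / c ε * u) *
              ∫ y in (u + (τ ε / ε - z₀) - τ ε / ε)..(u + (τ ε / ε - z₀)), K y‖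
            ≤ ∫ u in Iic (0:ℝ), Real.exp (om1 γ ε / c ε * u) * M := hle
          _ = 1 / (om1 γ ε / c ε) * M := by rw [integral_mul_const, valExpIic hr]
      have hAF : 0 < AF ε := by
        rw [hAFdef]
        exact div_pos hε (mul_pos hc hsub)
      calc ‖AF ε * JF ε‖ = AF ε * ‖JF ε‖ := by
            rw [norm_mul, Real.norm_eq_abs (AF ε), abs_of_pos hAF]
        _ ≤ AF ε * (1 / (om1 γ ε / c ε) * M) := by
            exact mul_le_mul_of_nonneg_left hJ hAF.le
        _ = ε * M / ((om1 γ ε - om2 γ ε) * om1 γ ε) := by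
            rw [hAFdef]
            field_simp
    · have h := (hεlim.mul_const M).div ((hom1.sub hom2).mul hom1)
        (by norm_num : (1 - 0) * 1 ≠ (0:ℝ))
      simpa [Pi.div_def] using h
  -- coefficient limit
  have hcoef : Tendsto coefF (𝓝[>] (0:ℝ)) (𝓝 (1 / (1 + γ))) := by
    have h : Tendsto (fun ε => om1 γ ε / ((om1 γ ε - om2 γ ε) * (1 + γ)))
        (𝓝[>] (0:ℝ)) (𝓝 (1 / ((1 - 0) * (1 + γ)))) :=
      hom1.div ((hom1.sub hom2).mul tendsto_const_nhds)
        (by simp; positivity)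
    rw [show (1:ℝ) / ((1 - 0) * (1 + γ)) = 1 / (1 + γ) by norm_num] at h
    apply h.congr'
    filter_upwards [hgood] with ε ⟨hε, hc, hτ, h12, h1p, h2p, hprod⟩
    have hsub : 0 < om1 γ ε - om2 γ ε := by linarith
    rw [hcoefdef]
    field_simp
    linear_combination hprod
  -- limit of IF by dominated convergence
  have hIlim : Tendsto IF (𝓝[>] (0:ℝ)) (𝓝 (1 - Real.exp vs)) := by
    have hflim : ∫ v in Iic (0:ℝ), (Ioi vs).indicator Real.exp v = 1 - Real.exp vs := by
      rw [setIntegral_indicator measurableSet_Ioi,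
        show Iic (0:ℝ) ∩ Ioi vs = Ioc vs 0 from by rw [inter_comm, Set.Ioi_inter_Iic],
        ← intervalIntegral.integral_of_le hvs0.le, integral_exp, Real.exp_zero]
    rw [hIFdef, ← hflim]
    refine tendsto_integral_filter_of_dominated_convergence (fun v => M * Real.exp v)
      ?_ ?_ ?_ ?_
    · refine Eventually.of_forall fun ε => Continuous.aestronglyMeasurable ?_ |>.restrict
      exact continuous_exp.mul ((hGcont (τ ε / ε)).comp
        ((continuous_id.mul continuous_const).add continuous_const))
    · refine Eventually.of_forall fun ε => ae_of_all _ fun v => ?_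
      rw [Real.norm_eq_abs, abs_mul, Real.abs_exp]
      calc Real.exp v * |∫ y in (v * (c ε / om2 γ ε) + (τ ε / ε - z₀) - τ ε / ε)..(v * (c ε / om2 γ ε) + (τ ε / ε - z₀)), K y|
          ≤ Real.exp v * M := mul_le_mul_of_nonneg_left (hggb _ _) (Real.exp_pos v).le
        _ = M * Real.exp v := mul_comm _ _
    · exact (integrableOn_exp_Iic 0).const_mul M
    · have h1 : ∀ᵐ v : ℝ, v ∉ ({vs} : Set ℝ) :=
        measure_eq_zero_iff_ae_notMem.mp (measure_singleton vs)
      have h2 : ∀ᵐ v : ℝ, v ∉ ({0} : Set ℝ) :=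
        measure_eq_zero_iff_ae_notMem.mp (measure_singleton 0)
      filter_upwards [ae_restrict_mem measurableSet_Iic, ae_restrict_of_ae h1,
        ae_restrict_of_ae h2] with v hv hv1 hv2
      simp only [Set.mem_singleton_iff] at hv1 hv2
      have hvneg : v < 0 := lt_of_le_of_ne hv hv2
      have hshape : ∀ ε : ℝ, (Real.exp v *
            ∫ y in (v * (c ε / om2 γ ε) + (τ ε / ε - z₀) - τ ε / ε)..(v * (c ε / om2 γ ε) + (τ ε / ε - z₀)), K y)
          = Real.exp v * (F (v * (c ε / om2 γ ε) + (τ ε / ε - z₀))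
              - F (v * (c ε / om2 γ ε) + (τ ε / ε - z₀) - τ ε / ε)) := fun ε => by rw [hgg]
      have t1 : Tendsto (fun ε => c ε / om2 γ ε) (𝓝[>] (0:ℝ)) atTop := by
        have hom2' : Tendsto (fun ε => om2 γ ε) (𝓝[>] (0:ℝ)) (𝓝[>] 0) := by
          rw [tendsto_nhdsWithin_iff]
          exact ⟨hom2, hgood.mono fun ε h => h.2.2.2.2.2.1⟩
        have := Tendsto.pos_mul_atTop hcf hccf hom2'.inv_tendsto_nhdsGT_zero
        exact this.congr fun ε => (div_eq_mul_inv _ _).symm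
      have t2 : Tendsto (fun ε => v * (c ε / om2 γ ε)) (𝓝[>] (0:ℝ)) atBot :=
        Tendsto.neg_mul_atTop hvneg tendsto_const_nhds t1
      have t3 : Tendsto (fun ε => v * (c ε / om2 γ ε) + (τ ε / ε - z₀) - τ ε / ε)
          (𝓝[>] (0:ℝ)) atBot :=
        (tendsto_atBot_add_const_right _ (-z₀) t2).congr fun ε => by ring
      have tFa : Tendsto (fun ε => F (v * (c ε / om2 γ ε) + (τ ε / ε - z₀) - τ ε / ε))
          (𝓝[>] (0:ℝ)) (𝓝 0) := hFbot.comp t3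
      have hw : Tendsto (fun ε => v * (c ε * om1 γ ε / (1 + γ)) + τ ε - ε * z₀) (𝓝[>] (0:ℝ))
          (𝓝 (v * (cf * 1 / (1 + γ)) + τ₀ - 0 * z₀)) :=
        ((tendsto_const_nhds.mul ((hccf.mul hom1).div_const (1 + γ))).add hττ₀).sub
          (hεlim.mul_const z₀)
      have hXeq : ∀ᶠ ε in 𝓝[>] (0:ℝ), (v * (c ε * om1 γ ε / (1 + γ)) + τ ε - ε * z₀) * ε⁻¹
          = v * (c ε / om2 γ ε) + (τ ε / ε - z₀) := by
        filter_upwards [hgood] with ε ⟨hε, hc, hτ, h12, h1p, h2p, hprod⟩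
        have hc2 : c ε / om2 γ ε = c ε * om1 γ ε / (ε * (1 + γ)) := by
          rw [div_eq_div_iff h2p.ne' (by positivity : (0:ℝ) < ε * (1 + γ)).ne']
          linear_combination (-(c ε)) * hprod
        rw [hc2]
        field_simp
        ring
      have hLval : v * (cf * 1 / (1 + γ)) + τ₀ - 0 * z₀ = cf / (1 + γ) * (v - vs) := by
        rw [hτ₀def]; ring
      rcases lt_or_gt_of_ne hv1 with hcase | hcase
      · -- v < vs : limit 0
        have hLneg : v * (cf * 1 / (1 + γ)) + τ₀ - 0 * z₀ < 0 := by
          rw [hLval]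
          exact mul_neg_of_pos_of_neg (div_pos hcf hγ1) (by linarith)
        have tX : Tendsto (fun ε => v * (c ε / om2 γ ε) + (τ ε / ε - z₀)) (𝓝[>] (0:ℝ)) atBot :=
          Tendsto.congr' hXeq (Tendsto.neg_mul_atTop hLneg hw tendsto_inv_nhdsGT_zero)
        have tF : Tendsto (fun ε => F (v * (c ε / om2 γ ε) + (τ ε / ε - z₀)))
            (𝓝[>] (0:ℝ)) (𝓝 0) := hFbot.comp tX
        rw [Set.indicator_of_notMem (by simp only [mem_Ioi, not_lt]; linarith)]
        have hfin := (tendsto_const_nhds : Tendsto (fun _ : ℝ => Real.exp v)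
          (𝓝[>] (0:ℝ)) (𝓝 (Real.exp v))).mul (tF.sub tFa)
        simpa using hfin.congr fun ε => (hshape ε).symm
      · -- vs < v : limit exp v
        have hLpos : 0 < v * (cf * 1 / (1 + γ)) + τ₀ - 0 * z₀ := by
          rw [hLval]
          exact mul_pos (div_pos hcf hγ1) (by linarith)
        have tX : Tendsto (fun ε => v * (c ε / om2 γ ε) + (τ ε / ε - z₀)) (𝓝[>] (0:ℝ)) atTop :=
          Tendsto.congr' hXeq (Tendsto.pos_mul_atTop hLpos hw tendsto_inv_nhdsGT_zero)
        have tF : Tendsto (fun ε => F (v * (c ε / om2 γ ε) + (τ ε / ε - z₀)))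
            (𝓝[>] (0:ℝ)) (𝓝 1) := hFtop.comp tX
        rw [Set.indicator_of_mem (mem_Ioi.mpr hcase)]
        have hfin := (tendsto_const_nhds : Tendsto (fun _ : ℝ => Real.exp v)
          (𝓝[>] (0:ℝ)) (𝓝 (Real.exp v))).mul (tF.sub tFa)
        simpa using hfin.congr fun ε => (hshape ε).symm
  -- assembly
  have hmain := (hcoef.mul hIlim).sub hT2
  have hval : 1 / (1 + γ) * (1 - Real.exp vs) - 0 = 1 - 2 * θ := by
    rw [hexpvs]
    field_simp
    ring
  rw [hval] at hmain
  exact Tendsto.congr' (key.mono fun ε h => h.symm) hmain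
end
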